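/- arXiv:2105.11355 — 4 statements merged into one kernel-verified Lean document; each statement's English description precedes it below -/
import Mathlib

section
/- There exists a continuous function f : [0,1] → [0,1] such that the lower-scaled oscillation l_f(x) is finite for every x ∈ [0,1], and for every y ∈ [0,1] the level set f⁻¹(y) is infinite. -/
open Set MeasureTheory Metric Filter
open scoped ENNReal NNReal Topology

/-- Lower-scaled oscillation of `f` with domain `A`:
`l_f(x) = liminf_{r→0⁺} (sup_{y ∈ A, dist y x ≤ r} dist (f y) (f x)) / r`. -/
noncomputable def lowerScaledOsc {E F : Type*} [PseudoMetricSpace E] [PseudoMetricSpace F]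
    (A : Set E) (f : E → F) (x : E) : ℝ≥0∞ :=
  Filter.liminf
    (fun r : ℝ =>
      (⨆ (y : E) (_ : y ∈ A) (_ : dist y x ≤ r), ENNReal.ofReal (dist (f y) (f x))) /
        ENNReal.ofReal r)
    (nhdsWithin 0 (Set.Ioi 0))

/-- Upper-scaled oscillation of `f` with domain `A`:
`L_f(x) = limsup_{r→0⁺} (sup_{y ∈ A, dist y x ≤ r} dist (f y) (f x)) / r`. -/
noncomputable def upperScaledOsc {E F : Type*} [PseudoMetricSpace E] [PseudoMetricSpace F]
    (A : Set E) (f : E → F) (x : E) : ℝ≥0∞ :=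
  Filter.limsup
    (fun r : ℝ =>
      (⨆ (y : E) (_ : y ∈ A) (_ : dist y x ≤ r), ENNReal.ofReal (dist (f y) (f x))) /
        ENNReal.ofReal r)
    (nhdsWithin 0 (Set.Ioi 0))

noncomputable section
namespace SO

def el (n : ℕ) : ℝ := (1/2)^(n+1) + (1/2) * (1/4)^n
def gl (n : ℕ) : ℝ := (1/4)^(n+1)
def amp (n : ℕ) : ℝ := (1/2)^n

lemma el_pos (n : ℕ) : 0 < el n := by unfold el; positivity
lemma gl_pos (n : ℕ) : 0 < gl n := by unfold gl; positivity
lemma amp_pos (n : ℕ) : 0 < amp n := by unfold amp; positivity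
lemma el_zero : el 0 = 1 := by norm_num [el]
lemma el_rec (n : ℕ) : el n = 2 * el (n+1) + gl n := by
  simp only [el, gl, pow_succ]; ring
lemma el_succ_lt (n : ℕ) : el (n+1) < el n := by
  have := el_pos (n+1); have := gl_pos n; rw [el_rec n]; linarith
lemma el_anti : ∀ {m n : ℕ}, m ≤ n → el n ≤ el m := by
  intro m n h
  induction n with
  | zero => simp_all
  | succ k ih =>
    rcases Nat.lt_or_ge m (k+1) with h'|h'
    · exact le_trans (el_succ_lt k).le (ih (Nat.lt_succ_iff.mp h'))
    · have : m = k+1 := le_antisymm h h'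
      subst this; rfl
lemma amp_le_four_el (n : ℕ) : amp n ≤ 4 * el (n+1) := by
  have h : (0:ℝ) < (1/4)^(n+1) := by positivity
  have e : 4 * el (n+1) = (1/2:ℝ)^n + 2*(1/4)^(n+1) := by
    simp only [el, pow_succ]; ring
  rw [e]; simp only [amp]; linarith
lemma amp_anti : ∀ {m n : ℕ}, m ≤ n → amp n ≤ amp m := by
  intro m n h
  exact pow_le_pow_of_le_one (by norm_num) (by norm_num) h
lemma amp_succ (n : ℕ) : amp (n+1) = amp n / 2 := by
  simp [amp, pow_succ]; ring

/-! ### intervals -/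

def IaA : ℕ → List Bool → ℝ
  | _, [] => 0
  | d, b :: σ => (if b then el d - el (d+1) else 0) + IaA (d+1) σ

lemma IaA_append (d : ℕ) (σ : List Bool) (b : Bool) :
    IaA d (σ ++ [b]) = IaA d σ + (if b then el (d+σ.length) - el (d+σ.length+1) else 0) := by
  induction σ generalizing d with
  | nil => simp [IaA]
  | cons a σ ih =>
      simp only [List.cons_append, IaA, List.length_cons]
      rw [ih (d+1)]
      have h1 : d + 1 + σ.length = d + (σ.length + 1) := by omega
      rw [h1]; ring

def Ia (σ : List Bool) : ℝ := IaA 0 σ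
def Ib (σ : List Bool) : ℝ := Ia σ + el σ.length
def ga (σ : List Bool) : ℝ := Ia σ + el (σ.length + 1)
def gb (σ : List Bool) : ℝ := Ib σ - el (σ.length + 1)

lemma Ia_snoc_false (σ : List Bool) : Ia (σ ++ [false]) = Ia σ := by
  simp [Ia, IaA_append]
lemma Ia_snoc_true (σ : List Bool) :
    Ia (σ ++ [true]) = Ia σ + (el σ.length - el (σ.length+1)) := by
  simp [Ia, IaA_append]
lemma Ib_snoc_false (σ : List Bool) : Ib (σ ++ [false]) = ga σ := by
  simp [Ib, ga, Ia_snoc_false]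
lemma Ia_snoc_true' (σ : List Bool) : Ia (σ ++ [true]) = gb σ := by
  simp [Ia_snoc_true, gb, Ib]; ring
lemma Ib_snoc_true (σ : List Bool) : Ib (σ ++ [true]) = Ib σ := by
  simp [Ib, Ia_snoc_true]; ring

lemma gb_sub_ga (σ : List Bool) : gb σ - ga σ = gl σ.length := by
  have := el_rec σ.length; simp only [ga, gb, Ib]; linarith
lemma ga_lt_gb (σ : List Bool) : ga σ < gb σ := by
  have := gl_pos σ.length; have := gb_sub_ga σ; linarith
lemma Ia_lt_ga (σ : List Bool) : Ia σ < ga σ := by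
  have := el_pos (σ.length+1); simp only [ga]; linarith
lemma gb_lt_Ib (σ : List Bool) : gb σ < Ib σ := by
  have := el_pos (σ.length+1); simp only [gb]; linarith

lemma snoc_nest (σ : List Bool) (b : Bool) :
    Ia σ ≤ Ia (σ ++ [b]) ∧ Ib (σ ++ [b]) ≤ Ib σ := by
  cases b
  · refine ⟨le_of_eq (Ia_snoc_false σ).symm, ?_⟩
    rw [Ib_snoc_false]
    have := el_anti (Nat.le_succ σ.length)
    simp only [ga, Ib]; linarith
  · refine ⟨?_, le_of_eq (Ib_snoc_true σ)⟩
    rw [Ia_snoc_true]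
    have := el_anti (Nat.le_succ σ.length)
    linarith

lemma nest_of_prefix {σ τ : List Bool} (h : σ <+: τ) :
    Ia σ ≤ Ia τ ∧ Ib τ ≤ Ib σ := by
  obtain ⟨ρ, rfl⟩ := h
  induction ρ using List.reverseRecOn with
  | nil => simp
  | append_singleton ρ b ih =>
      have h2 := snoc_nest (σ ++ ρ) b
      rw [← List.append_assoc] at *
      exact ⟨le_trans ih.1 h2.1, le_trans h2.2 ih.2⟩

lemma Ia_nonneg (σ : List Bool) : 0 ≤ Ia σ := by
  have := (nest_of_prefix (List.nil_prefix (l := σ))).1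
  simpa [Ia, IaA] using this
lemma Ib_le_one (σ : List Bool) : Ib σ ≤ 1 := by
  have := (nest_of_prefix (List.nil_prefix (l := σ))).2
  simpa [Ib, Ia, IaA, el_zero] using this


/-! ### combinatorial separation -/

lemma trich : ∀ (σ τ : List Bool), σ <+: τ ∨ τ <+: σ ∨
    ∃ c b, (c ++ [b]) <+: σ ∧ (c ++ [!b]) <+: τ
  | [], τ => Or.inl (List.nil_prefix)
  | (a :: σ), [] => Or.inr (Or.inl (List.nil_prefix))
  | (a :: σ), (a' :: τ) => by
      by_cases hb : a = a'
      · subst hb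
        rcases trich σ τ with h | h | ⟨c, b, h1, h2⟩
        · exact Or.inl (List.cons_prefix_cons.mpr ⟨rfl, h⟩)
        · exact Or.inr (Or.inl (List.cons_prefix_cons.mpr ⟨rfl, h⟩))
        · exact Or.inr (Or.inr ⟨a :: c, b, List.cons_prefix_cons.mpr ⟨rfl, h1⟩,
            List.cons_prefix_cons.mpr ⟨rfl, h2⟩⟩)
      · refine Or.inr (Or.inr ⟨[], a, ?_, ?_⟩)
        · exact List.cons_prefix_cons.mpr ⟨rfl, List.nil_prefix⟩
        · have : a' = !a := by cases a <;> cases a' <;> simp_all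
          subst this
          exact List.cons_prefix_cons.mpr ⟨rfl, List.nil_prefix⟩

lemma length_lt_of_strict_prefix {σ τ : List Bool} (h : σ <+: τ) (hne : σ ≠ τ) :
    σ.length < τ.length := by
  rcases Nat.lt_or_ge σ.length τ.length with h'|h'
  · exact h'
  · exact absurd (List.IsPrefix.eq_of_length_le h h') hne

/-- Quantitative separation of distinct gaps. -/
lemma qsep {σ τ : List Bool} (hne : σ ≠ τ) :
    gb σ + el (max σ.length τ.length + 1) ≤ ga τ ∨
    gb τ + el (max σ.length τ.length + 1) ≤ ga σ := by
  have key : ∀ σ τ : List Bool, σ <+: τ → σ ≠ τ →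
      gb σ + el (max σ.length τ.length + 1) ≤ ga τ ∨
      gb τ + el (max σ.length τ.length + 1) ≤ ga σ := by
    intro σ τ h hne
    obtain ⟨ρ, rfl⟩ := h
    have hρ : ρ ≠ [] := by rintro rfl; simp at hne
    obtain ⟨b, ρ', rfl⟩ := List.exists_cons_of_ne_nil hρ
    have hpre : (σ ++ [b]) <+: (σ ++ b :: ρ') := by
      refine ⟨ρ', by simp⟩
    have hnest := nest_of_prefix hpre
    have hlen : σ.length < (σ ++ b :: ρ').length := by simp
    have hmax : max σ.length (σ ++ b :: ρ').length = (σ ++ b :: ρ').length :=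
      max_eq_right hlen.le
    rw [hmax]
    cases b
    · -- τ inside left child, so gap τ is left of gap σ
      right
      have h1 : Ib (σ ++ false :: ρ') ≤ Ib (σ ++ [false]) := hnest.2
      rw [Ib_snoc_false] at h1
      simp only [gb]
      linarith
    · left
      have h1 : Ia (σ ++ [true]) ≤ Ia (σ ++ true :: ρ') := hnest.1
      rw [Ia_snoc_true'] at h1
      simp only [ga]
      linarith
  rcases trich σ τ with h | h | ⟨c, b, h1, h2⟩
  · exact key σ τ h hne
  · rcases key τ σ h (Ne.symm hne) with h' | h'
    · right; rwa [max_comm] at h'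
    · left; rwa [max_comm] at h'
  · -- diverging case
    have hb1 := nest_of_prefix h1
    have hb2 := nest_of_prefix h2
    have hσ : c.length + 1 ≤ σ.length := by
      have := h1.length_le; simpa using this
    have hτ : c.length + 1 ≤ τ.length := by
      have := h2.length_le; simpa using this
    have e1 : el (σ.length + 1) ≥ el (max σ.length τ.length + 1) :=
      el_anti (by omega)
    have e2 : el (τ.length + 1) ≥ el (max σ.length τ.length + 1) :=
      el_anti (by omega)
    cases b
    · -- σ in left child of c, τ in right child
      left
      have hA : Ib σ ≤ Ib (c ++ [false]) := hb1.2
      have hB : Ia (c ++ [true]) ≤ Ia τ := by simpa using hb2.1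
      rw [Ib_snoc_false] at hA
      rw [Ia_snoc_true'] at hB
      have := ga_lt_gb c
      simp only [gb, ga] at *
      have := el_pos (τ.length + 1)
      linarith
    · right
      have hA : Ib τ ≤ Ib (c ++ [false]) := by simpa using hb2.2
      have hB : Ia (c ++ [true]) ≤ Ia σ := hb1.1
      rw [Ib_snoc_false] at hA
      rw [Ia_snoc_true'] at hB
      have := ga_lt_gb c
      simp only [gb, ga] at *
      have := el_pos (σ.length + 1)
      linarith

/-- plain ordering of distinct gaps -/
lemma gap_order {σ τ : List Bool} (hne : σ ≠ τ) :
    gb σ ≤ ga τ ∨ gb τ ≤ ga σ := by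
  have := el_pos (max σ.length τ.length + 1)
  rcases qsep hne with h | h
  · left; linarith
  · right; linarith

lemma gap_disjoint {σ τ : List Bool} (hne : σ ≠ τ) {t : ℝ}
    (h1 : t ∈ Ioo (ga σ) (gb σ)) : t ∉ Ioo (ga τ) (gb τ) := by
  intro h2
  rcases gap_order hne with h | h
  · exact absurd (lt_of_lt_of_le h1.2 h) (not_lt.mpr h2.1.le)
  · exact absurd (lt_of_lt_of_le h2.2 h) (not_lt.mpr h1.1.le)

lemma ga_inj {σ τ : List Bool} (h : ga σ = ga τ) : σ = τ := by
  by_contra hne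
  rcases qsep hne with h' | h'
  · have := ga_lt_gb σ; have := el_pos (max σ.length τ.length + 1); linarith
  · have := ga_lt_gb τ; have := el_pos (max σ.length τ.length + 1); linarith

lemma gb_inj {σ τ : List Bool} (h : gb σ = gb τ) : σ = τ := by
  by_contra hne
  rcases qsep hne with h' | h'
  · have := ga_lt_gb τ; have := el_pos (max σ.length τ.length + 1); linarith
  · have := ga_lt_gb σ; have := el_pos (max σ.length τ.length + 1); linarith

/-- full separation with closures -/
lemma sep_points {σ τ : List Bool} (hne : σ ≠ τ) {z w : ℝ}
    (hz : z ∈ Icc (ga σ) (gb σ)) (hw : w ∈ Icc (ga τ) (gb τ)) :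
    el (max σ.length τ.length + 1) ≤ |z - w| := by
  rcases qsep hne with h | h
  · have : z + el (max σ.length τ.length + 1) ≤ w := by
      have := hz.2; have := hw.1; linarith
    rw [abs_sub_comm, abs_of_nonneg (by have := el_pos (max σ.length τ.length + 1); linarith)]
    linarith
  · have : w + el (max σ.length τ.length + 1) ≤ z := by
      have := hw.2; have := hz.1; linarith
    rw [abs_of_nonneg (by have := el_pos (max σ.length τ.length + 1); linarith)]
    linarith


/-! ### the Cantor-like function F -/

def term (σ : List Bool) (t : ℝ) : ℝ := max 0 (min (t - ga σ) (gl σ.length))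

lemma term_nonneg (σ : List Bool) (t : ℝ) : 0 ≤ term σ t := le_max_left _ _
lemma term_le_gl (σ : List Bool) (t : ℝ) : term σ t ≤ gl σ.length := by
  have := gl_pos σ.length
  simp only [term, max_le_iff]
  exact ⟨this.le, min_le_right _ _⟩
lemma term_mono (σ : List Bool) {s t : ℝ} (h : s ≤ t) : term σ s ≤ term σ t := by
  simp only [term]
  gcongr
lemma term_lipW (σ : List Bool) : LipschitzWith 1 (term σ) := by
  have h1 : LipschitzWith 1 (fun t : ℝ => min (t - ga σ) (gl σ.length)) := by
    have hs : LipschitzWith 1 (fun t : ℝ => t - ga σ) := by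
      simpa using LipschitzWith.id.sub (LipschitzWith.const (ga σ))
    have := hs.min (LipschitzWith.const (gl σ.length))
    simpa using this
  have h2 := (LipschitzWith.const (0:ℝ)).max h1
  show LipschitzWith 1 (fun t => max 0 (min (t - ga σ) (gl σ.length)))
  simpa using h2
lemma term_lip (σ : List Bool) (s t : ℝ) : |term σ t - term σ s| ≤ |t - s| := by
  have := (term_lipW σ).dist_le_mul t s
  simpa [Real.dist_eq] using this

lemma term_of_le_ga {σ : List Bool} {t : ℝ} (h : t ≤ ga σ) : term σ t = 0 := by
  simp only [term, max_eq_left_iff]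
  exact le_trans (min_le_left _ _) (by linarith)
lemma term_of_ge_gb {σ : List Bool} {t : ℝ} (h : gb σ ≤ t) : term σ t = gl σ.length := by
  have h2 := gb_sub_ga σ
  simp only [term]
  rw [min_eq_right (by linarith), max_eq_right (gl_pos _).le]
lemma term_in_gap {σ : List Bool} {t : ℝ} (h1 : ga σ ≤ t) (h2 : t ≤ gb σ) :
    term σ t = t - ga σ := by
  have h3 := gb_sub_ga σ
  simp only [term]
  rw [min_eq_left (by linarith), max_eq_right (by linarith)]
lemma term_cont (σ : List Bool) : Continuous (term σ) := by
  unfold term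
  fun_prop

/-- finite set of all lists of length n -/
def Lists : ℕ → Finset (List Bool)
  | 0 => {[]}
  | n+1 => (Lists n).biUnion (fun σ => {σ ++ [false], σ ++ [true]})

lemma mem_Lists {n : ℕ} {σ : List Bool} : σ ∈ Lists n ↔ σ.length = n := by
  induction n generalizing σ with
  | zero => simp [Lists, List.length_eq_zero_iff]
  | succ k ih =>
    simp only [Lists, Finset.mem_biUnion, Finset.mem_insert, Finset.mem_singleton]
    constructor
    · rintro ⟨τ, hτ, h | h⟩ <;> subst h <;> simp [ih.mp hτ]
    · intro h
      induction σ using List.reverseRecOn with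
      | nil => simp at h
      | append_singleton τ b _ =>
        refine ⟨τ, ih.mpr (by simpa using h), ?_⟩
        cases b
        · left; rfl
        · right; rfl

lemma card_Lists (n : ℕ) : (Lists n).card = 2^n := by
  induction n with
  | zero => simp [Lists]
  | succ k ih =>
    rw [Lists, Finset.card_biUnion, ]
    · have : ∀ σ ∈ Lists k, ({σ ++ [false], σ ++ [true]} : Finset (List Bool)).card = 2 := by
        intro σ _
        rw [Finset.card_insert_of_notMem (by simp), Finset.card_singleton]
      rw [Finset.sum_congr rfl this, Finset.sum_const, ih]
      ring
    · intro σ _ τ _ hne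
      simp only [Finset.disjoint_left, Finset.mem_insert, Finset.mem_singleton]
      rintro a (rfl | rfl) (h | h) <;>
        exact hne (List.append_inj' h (by simp)).1

def Tm (n : ℕ) (t : ℝ) : ℝ := ∑ σ ∈ Lists n, term σ t

lemma Tm_nonneg (n : ℕ) (t : ℝ) : 0 ≤ Tm n t :=
  Finset.sum_nonneg fun σ _ => term_nonneg σ t

lemma two_pow_mul_gl (n : ℕ) : (2:ℝ)^n * gl n = (1/4)*(1/2)^n := by
  have h : (2:ℝ)^n * (1/4)^n = ((2:ℝ)*(1/4))^n := (mul_pow _ _ _).symm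
  simp only [gl, pow_succ]
  rw [show (2:ℝ)^n * ((1/4)^n * (1/4)) = ((2:ℝ)^n * (1/4)^n) * (1/4) by ring, h,
    show (2:ℝ)*(1/4) = 1/2 by norm_num]
  ring

lemma Tm_le (n : ℕ) (t : ℝ) : Tm n t ≤ (1/4)*(1/2)^n := by
  have h1 : Tm n t ≤ ∑ σ ∈ Lists n, gl σ.length :=
    Finset.sum_le_sum fun σ _ => term_le_gl σ t
  have h2 : ∑ σ ∈ Lists n, gl σ.length = (2:ℝ)^n * gl n := by
    rw [Finset.sum_congr rfl (fun σ hσ => by rw [mem_Lists.mp hσ]), Finset.sum_const,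
      card_Lists, nsmul_eq_mul]
    norm_num
  rw [h2, two_pow_mul_gl] at h1
  exact h1

lemma summable_geom_quarter : Summable (fun n : ℕ => (1/4:ℝ)*(1/2)^n) :=
  (summable_geometric_of_lt_one (by norm_num) (by norm_num)).mul_left _

lemma summable_Tm (t : ℝ) : Summable (fun n => Tm n t) :=
  Summable.of_nonneg_of_le (fun n => Tm_nonneg n t) (fun n => Tm_le n t) summable_geom_quarter

def FF (t : ℝ) : ℝ := 2*t - 2*∑' n, Tm n t

lemma Tm_cont (n : ℕ) : Continuous (Tm n) :=
  continuous_finset_sum _ fun σ _ => term_cont σ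

lemma FF_cont : Continuous FF := by
  have h : Continuous (fun t => ∑' n, Tm n t) := by
    refine continuous_tsum Tm_cont summable_geom_quarter (fun n t => ?_)
    rw [Real.norm_eq_abs, abs_of_nonneg (Tm_nonneg n t)]
    exact Tm_le n t
  unfold FF
  fun_prop

/-- sum over any finite set of gaps of length-increments is at most the total length -/
lemma sum_termdiff_le : ∀ (S : Finset (List Bool)) {s t : ℝ}, s ≤ t →
    ∑ σ ∈ S, (term σ t - term σ s) ≤ t - s := by
  intro S
  induction S using Finset.strongInduction with
  | _ S ih =>
    intro s t hst
    rcases S.eq_empty_or_nonempty with rfl | hS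
    · simpa using sub_nonneg.mpr hst
    obtain ⟨σm, hmem, hmax⟩ := S.exists_max_image ga hS
    have horder : ∀ τ ∈ S, τ ≠ σm → gb τ ≤ ga σm := by
      intro τ hτ hne
      rcases gap_order hne with h | h
      · exact h
      · have h1 := hmax τ hτ
        have h2 := ga_lt_gb σm
        linarith
    rw [← Finset.add_sum_erase S _ hmem]
    rcases le_total (ga σm) s with hsm | hsm
    · -- everything relevant is left of s except possibly σm's gap
      have hz : ∀ τ ∈ S.erase σm, term τ t - term τ s = 0 := by
        intro τ hτ
        have h1 := horder τ (Finset.mem_of_mem_erase hτ) (Finset.ne_of_mem_erase hτ)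
        rw [term_of_ge_gb (by linarith), term_of_ge_gb (by linarith : gb τ ≤ s), sub_self]
      rw [Finset.sum_eq_zero hz, add_zero]
      have := term_lip σm s t
      have h2 : term σm t - term σm s ≤ |t - s| := le_trans (le_abs_self _) this
      rw [abs_of_nonneg (by linarith)] at h2
      exact h2
    · -- s < ga σm ; split at m := ga σm
      set m := ga σm with hm
      set t' := min t m with ht'
      have hst' : s ≤ t' := le_min hst hsm
      have hsub : S.erase σm ⊂ S := Finset.erase_ssubset hmem
      have hind := ih _ hsub hst'
      have heq : ∀ τ ∈ S.erase σm, term τ t - term τ s = term τ t' - term τ s := by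
        intro τ hτ
        rcases le_total t m with h | h
        · rw [show t' = t from min_eq_left h]
        · have h1 := horder τ (Finset.mem_of_mem_erase hτ) (Finset.ne_of_mem_erase hτ)
          rw [show t' = m from min_eq_right h,
            term_of_ge_gb (show gb τ ≤ t by linarith),
            term_of_ge_gb (show gb τ ≤ m by linarith)]
      rw [Finset.sum_congr rfl heq]
      have hmain : term σm t - term σm s ≤ t - t' := by
        rw [term_of_le_ga hsm]
        rcases le_total t m with h | h
        · rw [term_of_le_ga h, show t' = t from min_eq_left h]; simp
        · rw [show t' = m from min_eq_right h]
          have : term σm t ≤ t - m := le_trans (by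
              simp only [term, max_le_iff]
              constructor
              · linarith
              · exact min_le_left _ _) (le_refl _)
          linarith
      linarith

lemma Lists_pairwise_disj {n m : ℕ} (h : n ≠ m) : Disjoint (Lists n) (Lists m) := by
  simp only [Finset.disjoint_left]
  intro σ h1 h2
  rw [mem_Lists] at h1 h2
  omega

lemma sum_range_Tm_diff_le {s t : ℝ} (h : s ≤ t) (N : ℕ) :
    ∑ n ∈ Finset.range N, (Tm n t - Tm n s) ≤ t - s := by
  have h1 : ∀ n ∈ Finset.range N, Tm n t - Tm n s = ∑ σ ∈ Lists n, (term σ t - term σ s) := by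
    intro n _
    rw [Tm, Tm, Finset.sum_sub_distrib]
  rw [Finset.sum_congr rfl h1, ← Finset.sum_biUnion]
  · exact sum_termdiff_le _ h
  · intro a ha b hb hab
    exact Lists_pairwise_disj hab

lemma summable_Tm_diff (s t : ℝ) : Summable (fun n => Tm n t - Tm n s) :=
  (summable_Tm t).sub (summable_Tm s)

lemma tsum_Tm_diff_bounds {s t : ℝ} (h : s ≤ t) :
    0 ≤ ∑' n, (Tm n t - Tm n s) ∧ ∑' n, (Tm n t - Tm n s) ≤ t - s := by
  constructor
  · refine tsum_nonneg fun n => ?_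
    have : Tm n s ≤ Tm n t := Finset.sum_le_sum fun σ _ => term_mono σ h
    linarith
  · exact Summable.tsum_le_of_sum_range_le (summable_Tm_diff s t) (sum_range_Tm_diff_le h)

lemma FF_sub (s t : ℝ) : FF t - FF s = 2*(t-s) - 2*∑' n, (Tm n t - Tm n s) := by
  unfold FF
  rw [Summable.tsum_sub (summable_Tm t) (summable_Tm s)]
  ring

lemma FF_mono : Monotone FF := by
  intro s t h
  have h1 := (tsum_Tm_diff_bounds h).2
  have h2 := FF_sub s t
  linarith

lemma FF_lip (s t : ℝ) : |FF t - FF s| ≤ 2*|t - s| := by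
  rcases le_total s t with h | h
  · have h1 := (tsum_Tm_diff_bounds h).1
    have h2 := (tsum_Tm_diff_bounds h).2
    have h3 := FF_sub s t
    rw [abs_of_nonneg (by linarith), abs_of_nonneg (by linarith)]
    linarith
  · have h1 := (tsum_Tm_diff_bounds h).1
    have h2 := (tsum_Tm_diff_bounds h).2
    have h3 := FF_sub t s
    rw [abs_of_nonpos (by linarith), abs_of_nonpos (by linarith)]
    linarith


/-! ### binary values -/

def valA : ℕ → List Bool → ℝ
  | _, [] => 0
  | d, b :: σ => (if b then (1/2:ℝ)^(d+1) else 0) + valA (d+1) σ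

lemma valA_append (d : ℕ) (σ : List Bool) (b : Bool) :
    valA d (σ ++ [b]) = valA d σ + (if b then (1/2:ℝ)^(d+σ.length+1) else 0) := by
  induction σ generalizing d with
  | nil => simp [valA]
  | cons a σ ih =>
      simp only [List.cons_append, valA, List.length_cons]
      rw [ih (d+1)]
      have h1 : d + 1 + σ.length = d + (σ.length + 1) := by omega
      rw [h1]
      ring_nf

def val (σ : List Bool) : ℝ := valA 0 σ

lemma val_snoc_false (σ : List Bool) : val (σ ++ [false]) = val σ := by
  simp [val, valA_append]
lemma val_snoc_true (σ : List Bool) :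
    val (σ ++ [true]) = val σ + (1/2:ℝ)^(σ.length+1) := by
  simp [val, valA_append]

/-! ### F on gaps and intervals -/

lemma Tm_diff_gap {σ : List Bool} {s t : ℝ} (hs : ga σ ≤ s) (ht : t ≤ gb σ)
    (hst : s ≤ t) (n : ℕ) :
    Tm n t - Tm n s = if σ.length = n then t - s else 0 := by
  have key : ∀ τ ∈ Lists n, term τ t - term τ s =
      if τ = σ then t - s else 0 := by
    intro τ _
    by_cases hτ : τ = σ
    · subst hτ
      rw [if_pos rfl, term_in_gap hs (le_trans hst ht), term_in_gap (le_trans hs hst) ht]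
      ring
    · rw [if_neg hτ]
      rcases gap_order hτ with h | h
      · -- gb τ ≤ ga σ ≤ s ≤ t
        rw [term_of_ge_gb (by linarith), term_of_ge_gb (by linarith : gb τ ≤ s), sub_self]
      · -- t ≤ gb σ ≤ ga τ
        rw [term_of_le_ga (by linarith), term_of_le_ga (by linarith : s ≤ ga τ), sub_self]
  rw [Tm, Tm, ← Finset.sum_sub_distrib, Finset.sum_congr rfl key]
  by_cases hn : σ.length = n
  · rw [if_pos hn, Finset.sum_ite_eq' (Lists n) σ (fun _ => t - s),
      if_pos (mem_Lists.mpr hn)]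
  · rw [if_neg hn, Finset.sum_ite_eq' (Lists n) σ (fun _ => t - s),
      if_neg (fun h => hn (mem_Lists.mp h))]

lemma FF_gap_const {σ : List Bool} {s t : ℝ} (hs : ga σ ≤ s) (ht : t ≤ gb σ)
    (hst : s ≤ t) : FF t = FF s := by
  have h1 := FF_sub s t
  have h2 : ∑' n, (Tm n t - Tm n s) = t - s := by
    rw [tsum_eq_single σ.length]
    · rw [Tm_diff_gap hs ht hst, if_pos rfl]
    · intro n hn
      rw [Tm_diff_gap hs ht hst n, if_neg (fun hh => hn hh.symm)]
  rw [h2] at h1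
  linarith

lemma term_diff_interval {τ σ : List Bool} :
    term σ (Ib τ) - term σ (Ia τ) = if τ <+: σ then gl σ.length else 0 := by
  by_cases h : τ <+: σ
  · rw [if_pos h]
    have hnest := nest_of_prefix h
    have h1 : Ia τ ≤ ga σ := le_trans hnest.1 (Ia_lt_ga σ).le
    have h2 : gb σ ≤ Ib τ := le_trans (gb_lt_Ib σ).le hnest.2
    rw [term_of_ge_gb h2, term_of_le_ga h1, sub_zero]
  · rw [if_neg h]
    have hIab : Ia τ ≤ Ib τ := by
      have := el_pos τ.length; simp only [Ib]; linarith
    rcases trich σ τ with hp | hp | ⟨c, b, h1, h2⟩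
    · -- σ <+: τ, and σ ≠ τ since ¬ τ <+: σ
      have hne : σ ≠ τ := by rintro rfl; exact h (List.prefix_refl σ)
      obtain ⟨ρ, rfl⟩ := hp
      have hρ : ρ ≠ [] := by rintro rfl; simp at hne
      obtain ⟨b, ρ', rfl⟩ := List.exists_cons_of_ne_nil hρ
      have hpre : (σ ++ [b]) <+: (σ ++ b :: ρ') := ⟨ρ', by simp⟩
      have hnest := nest_of_prefix hpre
      cases b
      · have hA : Ib (σ ++ false :: ρ') ≤ ga σ := by
          have := hnest.2; rwa [Ib_snoc_false] at this
        rw [term_of_le_ga (by linarith), term_of_le_ga (by linarith : Ia (σ ++ false :: ρ') ≤ ga σ),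
          sub_self]
      · have hA : gb σ ≤ Ia (σ ++ true :: ρ') := by
          have := hnest.1; rwa [Ia_snoc_true'] at this
        rw [term_of_ge_gb (by linarith : gb σ ≤ Ib (σ ++ true :: ρ')),
          term_of_ge_gb (by linarith), sub_self]
    · exact absurd hp h
    · -- diverging
      have hb1 := nest_of_prefix h1
      have hb2 := nest_of_prefix h2
      have hcc := ga_lt_gb c
      cases b
      · -- σ in left child, τ in right child : interval τ is right of gap σ
        have hA : Ib σ ≤ ga c := by
          have := hb1.2; rwa [Ib_snoc_false] at this
        have hB : gb c ≤ Ia τ := by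
          have := hb2.1; simp only [Bool.not_false] at this; rwa [Ia_snoc_true'] at this
        have hgb := gb_lt_Ib σ
        rw [term_of_ge_gb (by linarith : gb σ ≤ Ib τ),
          term_of_ge_gb (by linarith), sub_self]
      · have hA : gb c ≤ Ia σ := by
          have := hb1.1; rwa [Ia_snoc_true'] at this
        have hB : Ib τ ≤ ga c := by
          have := hb2.2; simp only [Bool.not_true] at this; rwa [Ib_snoc_false] at this
        have hga := Ia_lt_ga σ
        rw [term_of_le_ga (by linarith), term_of_le_ga (by linarith : Ia τ ≤ ga σ), sub_self]

lemma filter_prefix_card (τ : List Bool) {n : ℕ} (h : τ.length ≤ n) :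
    ((Lists n).filter (fun σ => τ <+: σ)).card = 2^(n - τ.length) := by
  have himg : (Lists n).filter (fun σ => τ <+: σ) = (Lists (n - τ.length)).image (τ ++ ·) := by
    ext x
    simp only [Finset.mem_filter, Finset.mem_image, mem_Lists]
    constructor
    · rintro ⟨hlen, ρ, rfl⟩
      exact ⟨ρ, by simp at hlen ⊢; omega, rfl⟩
    · rintro ⟨ρ, hρ, rfl⟩
      constructor
      · simp; omega
      · exact ⟨ρ, rfl⟩
  rw [himg, Finset.card_image_of_injective _ (List.append_right_injective τ), card_Lists]

lemma Tm_diff_interval (τ : List Bool) (n : ℕ) :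
    Tm n (Ib τ) - Tm n (Ia τ) =
      if τ.length ≤ n then (2:ℝ)^(n - τ.length) * gl n else 0 := by
  rw [Tm, Tm, ← Finset.sum_sub_distrib,
    Finset.sum_congr rfl (fun σ _ => term_diff_interval (τ := τ) (σ := σ))]
  by_cases h : τ.length ≤ n
  · rw [if_pos h, Finset.sum_ite, Finset.sum_const_zero, add_zero]
    have : ∀ σ ∈ (Lists n).filter (fun σ => τ <+: σ), gl σ.length = gl n := by
      intro σ hσ
      rw [mem_Lists.mp (Finset.mem_filter.mp hσ).1]
    rw [Finset.sum_congr rfl this, Finset.sum_const, filter_prefix_card τ h, nsmul_eq_mul]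
    norm_num
  · rw [if_neg h]
    refine Finset.sum_eq_zero fun σ hσ => ?_
    rw [if_neg]
    intro hpre
    exact h (le_trans hpre.length_le (le_of_eq (mem_Lists.mp hσ)))

lemma tsum_geom_half : ∑' n : ℕ, (1/2:ℝ)^n = 2 := by
  rw [tsum_geometric_of_lt_one (by norm_num) (by norm_num)]
  norm_num

lemma FF_incr (τ : List Bool) : FF (Ib τ) - FF (Ia τ) = amp τ.length := by
  set k := τ.length with hk
  have hIab : Ia τ ≤ Ib τ := by
    have := el_pos τ.length; simp only [Ib]; linarith
  have h1 := FF_sub (Ia τ) (Ib τ)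
  have h2 : ∑' n, (Tm n (Ib τ) - Tm n (Ia τ)) = (1/4:ℝ)^(k+1) * 2 := by
    have hshift : ∑' n, (Tm n (Ib τ) - Tm n (Ia τ)) =
        ∑' j : ℕ, (Tm (k + j) (Ib τ) - Tm (k + j) (Ia τ)) := by
      refine (Function.Injective.tsum_eq (fun a b hab => by omega) ?_).symm
      intro n hn
      simp only [Function.mem_support] at hn
      rw [Tm_diff_interval] at hn
      by_cases h : k ≤ n
      · exact ⟨n - k, by omega⟩
      · rw [if_neg h] at hn; exact absurd rfl hn
    rw [hshift]
    have hval : ∀ j : ℕ, Tm (k + j) (Ib τ) - Tm (k + j) (Ia τ) = (1/4:ℝ)^(k+1) * (1/2)^j := by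
      intro j
      rw [Tm_diff_interval, if_pos (by omega), show k + j - k = j by omega]
      simp only [gl, pow_add, pow_succ]
      rw [show ((2:ℝ)^j * ((1/4)^k * (1/4)^j * (1/4))) =
        ((1/4)^k * (1/4)) * (((2:ℝ)*(1/4))^j) by rw [mul_pow]; ring]
      norm_num
    rw [tsum_congr hval, tsum_mul_left, tsum_geom_half]
  rw [h2] at h1
  have : FF (Ib τ) - FF (Ia τ) = 2 * el k - 4 * (1/4:ℝ)^(k+1) := by
    simp only [Ib] at h1 ⊢
    linarith
  rw [this]
  simp only [el, amp, pow_succ]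
  ring

lemma FF_zero : FF 0 = 0 := by
  have h : ∀ n, Tm n 0 = 0 := by
    intro n
    refine Finset.sum_eq_zero fun σ _ => term_of_le_ga ?_
    have := Ia_nonneg σ; have := Ia_lt_ga σ; linarith
  unfold FF
  rw [tsum_congr h]
  simp

lemma FF_endpoints : ∀ σ : List Bool, FF (Ia σ) = val σ ∧ FF (Ib σ) = val σ + amp σ.length := by
  intro σ
  induction σ using List.reverseRecOn with
  | nil =>
    constructor
    · simpa [Ia, IaA, val, valA] using FF_zero
    · have := FF_incr ([] : List Bool)
      simp only [List.length_nil] at this ⊢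
      have h0 : FF (Ia ([] : List Bool)) = 0 := by simpa [Ia, IaA] using FF_zero
      simp [val, valA, amp] at *
      linarith
  | append_singleton σ b ih =>
    have hlenf : (σ ++ [false]).length = σ.length + 1 := by simp
    have hlent : (σ ++ [true]).length = σ.length + 1 := by simp
    cases b
    · constructor
      · rw [Ia_snoc_false, val_snoc_false]; exact ih.1
      · have h1 := FF_incr (σ ++ [false])
        rw [Ib_snoc_false, Ia_snoc_false, ih.1] at h1
        rw [Ib_snoc_false, val_snoc_false]
        linarith
    · have hgb : FF (gb σ) = FF (ga σ) := FF_gap_const le_rfl le_rfl (ga_lt_gb σ).le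
      have hga : FF (ga σ) = val σ + amp (σ.length + 1) := by
        have h1 := FF_incr (σ ++ [false])
        rw [Ib_snoc_false, Ia_snoc_false, ih.1, hlenf] at h1
        linarith
      constructor
      · rw [Ia_snoc_true', hgb, hga, val_snoc_true]
        simp [amp]
      · have h2 := FF_incr (σ ++ [true])
        rw [Ia_snoc_true', hgb, hga, hlent] at h2
        rw [val_snoc_true, hlent]
        have : amp (σ.length + 1) = (1/2:ℝ)^(σ.length+1) := rfl
        linarith


def vv (σ : List Bool) : ℝ := val σ + (1/2:ℝ)^(σ.length+1)

lemma FF_ga (σ : List Bool) : FF (ga σ) = vv σ := by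
  have h := (FF_endpoints (σ ++ [false])).2
  rw [Ib_snoc_false, val_snoc_false] at h
  rw [h, vv]
  simp [amp]

lemma FF_gb (σ : List Bool) : FF (gb σ) = vv σ := by
  have h := (FF_endpoints (σ ++ [true])).1
  rw [Ia_snoc_true', val_snoc_true] at h
  rw [h, vv]

lemma FF_gap_val {σ : List Bool} {t : ℝ} (ht : t ∈ Icc (ga σ) (gb σ)) : FF t = vv σ := by
  rw [FF_gap_const (le_refl (ga σ)) ht.2 ht.1, FF_ga]

lemma FF_one : FF 1 = 1 := by
  have h := (FF_endpoints ([] : List Bool)).2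
  simp only [Ib, Ia, IaA, List.length_nil, el_zero, val, valA, amp, pow_zero] at h
  simpa using h

lemma FF_mem {x : ℝ} (hx : x ∈ Icc (0:ℝ) 1) : FF x ∈ Icc (0:ℝ) 1 := by
  constructor
  · have := FF_mono hx.1; rwa [FF_zero] at this
  · have := FF_mono hx.2; rwa [FF_one] at this

lemma ga_mem (σ : List Bool) : ga σ ∈ Icc (0:ℝ) 1 := by
  constructor
  · have := Ia_nonneg σ; have := Ia_lt_ga σ; linarith
  · have := gb_lt_Ib σ; have := Ib_le_one σ; have := ga_lt_gb σ; linarith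

lemma vv_mem (σ : List Bool) : vv σ ∈ Icc (0:ℝ) 1 := by
  rw [← FF_ga]; exact FF_mem (ga_mem σ)

/-! ### the wiggles -/

def dd (σ : List Bool) : ℝ := min (vv σ) (amp σ.length)
def uu (σ : List Bool) : ℝ := min (1 - vv σ) (amp σ.length)
def md (σ : List Bool) : ℝ := (ga σ + gb σ)/2
def q1 (σ : List Bool) : ℝ := (ga σ + md σ)/2
def q3 (σ : List Bool) : ℝ := (md σ + gb σ)/2
def c1 (σ : List Bool) : ℝ := 4 * dd σ / gl σ.length
def c2 (σ : List Bool) : ℝ := 4 * uu σ / gl σ.length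
def SS (σ : List Bool) : ℝ := c1 σ + c2 σ
def tent (p q t : ℝ) : ℝ := max 0 (min (t - p) (q - t))
def psig (σ : List Bool) (t : ℝ) : ℝ :=
  -(c1 σ) * tent (ga σ) (md σ) t + c2 σ * tent (md σ) (gb σ) t

lemma dd_nonneg (σ : List Bool) : 0 ≤ dd σ :=
  le_min (vv_mem σ).1 (amp_pos _).le
lemma uu_nonneg (σ : List Bool) : 0 ≤ uu σ :=
  le_min (by have := (vv_mem σ).2; linarith) (amp_pos _).le
lemma dd_le_amp (σ : List Bool) : dd σ ≤ amp σ.length := min_le_right _ _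
lemma uu_le_amp (σ : List Bool) : uu σ ≤ amp σ.length := min_le_right _ _
lemma c1_nonneg (σ : List Bool) : 0 ≤ c1 σ := by
  rw [c1]
  exact div_nonneg (by have := dd_nonneg σ; linarith) (gl_pos _).le
lemma c2_nonneg (σ : List Bool) : 0 ≤ c2 σ := by
  rw [c2]
  exact div_nonneg (by have := uu_nonneg σ; linarith) (gl_pos _).le
lemma SS_nonneg (σ : List Bool) : 0 ≤ SS σ := add_nonneg (c1_nonneg σ) (c2_nonneg σ)

lemma ga_lt_md (σ : List Bool) : ga σ < md σ := by
  have := ga_lt_gb σ; simp only [md]; linarith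
lemma md_lt_gb (σ : List Bool) : md σ < gb σ := by
  have := ga_lt_gb σ; simp only [md]; linarith
lemma ga_lt_q1 (σ : List Bool) : ga σ < q1 σ := by
  have := ga_lt_md σ; simp only [q1]; linarith
lemma q1_lt_md (σ : List Bool) : q1 σ < md σ := by
  have := ga_lt_md σ; simp only [q1]; linarith
lemma md_lt_q3 (σ : List Bool) : md σ < q3 σ := by
  have := md_lt_gb σ; simp only [q3]; linarith
lemma q3_lt_gb (σ : List Bool) : q3 σ < gb σ := by
  have := md_lt_gb σ; simp only [q3]; linarith

lemma md_sub_ga (σ : List Bool) : md σ - ga σ = gl σ.length / 2 := by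
  have := gb_sub_ga σ; simp only [md]; linarith
lemma gb_sub_md (σ : List Bool) : gb σ - md σ = gl σ.length / 2 := by
  have := gb_sub_ga σ; simp only [md]; linarith

lemma tent_nonneg (p q t : ℝ) : 0 ≤ tent p q t := le_max_left _ _
lemma tent_le_half {p q : ℝ} (t : ℝ) (h : p ≤ q) : tent p q t ≤ (q - p)/2 := by
  simp only [tent, max_le_iff]
  constructor
  · linarith
  · rcases le_total (t - p) (q - t) with h' | h'
    · rw [min_eq_left h']; linarith
    · rw [min_eq_right h']; linarith
lemma tent_zero_left {p q t : ℝ} (h : t ≤ p) : tent p q t = 0 := by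
  simp only [tent, max_eq_left_iff]
  exact le_trans (min_le_left _ _) (by linarith)
lemma tent_zero_right {p q t : ℝ} (h : q ≤ t) : tent p q t = 0 := by
  simp only [tent, max_eq_left_iff]
  exact le_trans (min_le_right _ _) (by linarith)
lemma tent_le_left (p q t : ℝ) : tent p q t ≤ max 0 (t - p) := by
  simp only [tent]
  exact max_le_max le_rfl (min_le_left _ _)
lemma tent_le_right (p q t : ℝ) : tent p q t ≤ max 0 (q - t) := by
  simp only [tent]
  exact max_le_max le_rfl (min_le_right _ _)
lemma tent_mid {p q : ℝ} (h : p ≤ q) : tent p q ((p+q)/2) = (q - p)/2 := by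
  simp only [tent]
  rw [show (p+q)/2 - p = (q-p)/2 by ring, show q - (p+q)/2 = (q-p)/2 by ring,
    min_self, max_eq_right (by linarith)]
lemma tent_lip (p q s t : ℝ) : |tent p q t - tent p q s| ≤ |t - s| := by
  have h1 : LipschitzWith 1 (fun t => tent p q t) := by
    have hs : LipschitzWith 1 (fun t : ℝ => t - p) := by
      simpa using LipschitzWith.id.sub (LipschitzWith.const p)
    have hq : LipschitzWith 1 (fun t : ℝ => q - t) := by
      simpa using (LipschitzWith.const q).sub LipschitzWith.id
    have := (LipschitzWith.const (0:ℝ)).max (by simpa using hs.min hq)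
    simpa [tent] using this
  have := h1.dist_le_mul t s
  simpa [Real.dist_eq] using this
lemma tent_cont (p q : ℝ) : Continuous (tent p q) := by
  unfold tent; fun_prop

lemma c1_mul_quarter (σ : List Bool) : c1 σ * (gl σ.length / 4) = dd σ := by
  have := (gl_pos σ.length).ne'
  field_simp [c1]
  simp only [c1]; field_simp
lemma c2_mul_quarter (σ : List Bool) : c2 σ * (gl σ.length / 4) = uu σ := by
  have := (gl_pos σ.length).ne'
  field_simp [c2]
  simp only [c2]; field_simp

lemma psig_zero_left {σ : List Bool} {t : ℝ} (h : t ≤ ga σ) : psig σ t = 0 := by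
  have h2 : t ≤ md σ := le_trans h (ga_lt_md σ).le
  rw [psig, tent_zero_left h, tent_zero_left h2]
  ring
lemma psig_zero_right {σ : List Bool} {t : ℝ} (h : gb σ ≤ t) : psig σ t = 0 := by
  have h2 : md σ ≤ t := le_trans (md_lt_gb σ).le h
  rw [psig, tent_zero_right h2, tent_zero_right h]
  ring

lemma psig_bounds (σ : List Bool) (t : ℝ) : -dd σ ≤ psig σ t ∧ psig σ t ≤ uu σ := by
  have hT1 : 0 ≤ tent (ga σ) (md σ) t ∧ tent (ga σ) (md σ) t ≤ gl σ.length / 4 := by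
    refine ⟨tent_nonneg _ _ _, ?_⟩
    have := tent_le_half t (ga_lt_md σ).le
    have := md_sub_ga σ
    linarith
  have hT2 : 0 ≤ tent (md σ) (gb σ) t ∧ tent (md σ) (gb σ) t ≤ gl σ.length / 4 := by
    refine ⟨tent_nonneg _ _ _, ?_⟩
    have := tent_le_half t (md_lt_gb σ).le
    have := gb_sub_md σ
    linarith
  have h1 : c1 σ * tent (ga σ) (md σ) t ≤ dd σ := by
    calc c1 σ * tent (ga σ) (md σ) t ≤ c1 σ * (gl σ.length / 4) := by
          exact mul_le_mul_of_nonneg_left hT1.2 (c1_nonneg σ)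
      _ = dd σ := c1_mul_quarter σ
  have h2 : c2 σ * tent (md σ) (gb σ) t ≤ uu σ := by
    calc c2 σ * tent (md σ) (gb σ) t ≤ c2 σ * (gl σ.length / 4) := by
          exact mul_le_mul_of_nonneg_left hT2.2 (c2_nonneg σ)
      _ = uu σ := c2_mul_quarter σ
  have ha := mul_nonneg (c1_nonneg σ) hT1.1
  have hb := mul_nonneg (c2_nonneg σ) hT2.1
  constructor
  · simp only [psig]; nlinarith
  · simp only [psig]; nlinarith

lemma psig_abs_le_amp (σ : List Bool) (t : ℝ) : |psig σ t| ≤ amp σ.length := by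
  have h := psig_bounds σ t
  have := dd_le_amp σ; have := uu_le_amp σ
  rw [abs_le]
  constructor <;> linarith

lemma psig_le_slope_left (σ : List Bool) (t : ℝ) :
    |psig σ t| ≤ SS σ * max 0 (t - ga σ) := by
  have h1 : tent (ga σ) (md σ) t ≤ max 0 (t - ga σ) := tent_le_left _ _ _
  have h2 : tent (md σ) (gb σ) t ≤ max 0 (t - ga σ) := by
    refine le_trans (tent_le_left _ _ _) (max_le_max le_rfl ?_)
    have := ga_lt_md σ; linarith
  have ha := tent_nonneg (ga σ) (md σ) t
  have hb := tent_nonneg (md σ) (gb σ) t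
  have hc := c1_nonneg σ; have hd := c2_nonneg σ
  have h3 : |psig σ t| ≤ c1 σ * tent (ga σ) (md σ) t + c2 σ * tent (md σ) (gb σ) t := by
    simp only [psig]
    refine le_trans (abs_add_le _ _) ?_
    rw [abs_mul, abs_mul, abs_neg, abs_of_nonneg hc, abs_of_nonneg hd,
      abs_of_nonneg ha, abs_of_nonneg hb]
  refine le_trans h3 ?_
  simp only [SS]
  nlinarith
lemma psig_le_slope_right (σ : List Bool) (t : ℝ) :
    |psig σ t| ≤ SS σ * max 0 (gb σ - t) := by
  have h1 : tent (ga σ) (md σ) t ≤ max 0 (gb σ - t) := by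
    refine le_trans (tent_le_right _ _ _) (max_le_max le_rfl ?_)
    have := md_lt_gb σ; linarith
  have h2 : tent (md σ) (gb σ) t ≤ max 0 (gb σ - t) := tent_le_right _ _ _
  have ha := tent_nonneg (ga σ) (md σ) t
  have hb := tent_nonneg (md σ) (gb σ) t
  have hc := c1_nonneg σ; have hd := c2_nonneg σ
  have h3 : |psig σ t| ≤ c1 σ * tent (ga σ) (md σ) t + c2 σ * tent (md σ) (gb σ) t := by
    simp only [psig]
    refine le_trans (abs_add_le _ _) ?_
    rw [abs_mul, abs_mul, abs_neg, abs_of_nonneg hc, abs_of_nonneg hd,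
      abs_of_nonneg ha, abs_of_nonneg hb]
  refine le_trans h3 ?_
  simp only [SS]
  nlinarith

lemma psig_lip (σ : List Bool) (s t : ℝ) : |psig σ t - psig σ s| ≤ SS σ * |t - s| := by
  have h1 := tent_lip (ga σ) (md σ) s t
  have h2 := tent_lip (md σ) (gb σ) s t
  have hc := c1_nonneg σ; have hd := c2_nonneg σ
  have : psig σ t - psig σ s =
      -(c1 σ) * (tent (ga σ) (md σ) t - tent (ga σ) (md σ) s)
      + c2 σ * (tent (md σ) (gb σ) t - tent (md σ) (gb σ) s) := by
    simp only [psig]; ring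
  rw [this]
  refine le_trans (abs_add_le _ _) ?_
  rw [abs_mul, abs_mul, abs_neg, abs_of_nonneg hc, abs_of_nonneg hd]
  simp only [SS]
  nlinarith [abs_nonneg (t - s)]

lemma psig_q1 (σ : List Bool) : psig σ (q1 σ) = -dd σ := by
  have h1 : tent (ga σ) (md σ) (q1 σ) = (md σ - ga σ)/2 := by
    have := tent_mid (ga_lt_md σ).le
    simpa [q1] using this
  have h2 : tent (md σ) (gb σ) (q1 σ) = 0 := tent_zero_left (q1_lt_md σ).le
  rw [psig, h1, h2, md_sub_ga]
  have := c1_mul_quarter σ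
  nlinarith
lemma psig_q3 (σ : List Bool) : psig σ (q3 σ) = uu σ := by
  have h1 : tent (md σ) (gb σ) (q3 σ) = (gb σ - md σ)/2 := by
    have := tent_mid (md_lt_gb σ).le
    simpa [q3] using this
  have h2 : tent (ga σ) (md σ) (q3 σ) = 0 := tent_zero_right (md_lt_q3 σ).le
  rw [psig, h1, h2, gb_sub_md]
  have := c2_mul_quarter σ
  nlinarith

lemma psig_cont (σ : List Bool) : Continuous (psig σ) := by
  unfold psig
  exact (continuous_const.mul (tent_cont _ _)).add (continuous_const.mul (tent_cont _ _))

lemma psig_zero_of_notin {σ : List Bool} {t : ℝ} (h : t ∉ Ioo (ga σ) (gb σ)) :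
    psig σ t = 0 := by
  rw [mem_Ioo, not_and_or] at h
  rcases h with h | h
  · exact psig_zero_left (not_lt.mp h)
  · exact psig_zero_right (not_lt.mp h)

/-! ### the perturbation ψ and the function f -/

def Ps (n : ℕ) (t : ℝ) : ℝ := ∑ σ ∈ Lists n, psig σ t

lemma Ps_eq_single {σ : List Bool} {t : ℝ} (hσ : t ∈ Ioo (ga σ) (gb σ)) :
    Ps (σ.length) t = psig σ t := by
  refine Finset.sum_eq_single_of_mem σ (mem_Lists.mpr rfl) ?_
  intro τ _ hne
  exact psig_zero_of_notin (gap_disjoint (Ne.symm hne) hσ)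

lemma Ps_zero {n : ℕ} {t : ℝ} (h : ∀ σ : List Bool, t ∉ Ioo (ga σ) (gb σ)) :
    Ps n t = 0 :=
  Finset.sum_eq_zero fun σ _ => psig_zero_of_notin (h σ)

lemma Ps_zero_of_len {σ : List Bool} {t : ℝ} (hσ : t ∈ Ioo (ga σ) (gb σ))
    {m : ℕ} (hm : m ≠ σ.length) : Ps m t = 0 := by
  refine Finset.sum_eq_zero fun τ hτ => psig_zero_of_notin ?_
  have : τ ≠ σ := by
    intro h; subst h
    exact hm (mem_Lists.mp hτ).symm
  exact gap_disjoint (Ne.symm this) hσ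

lemma Ps_abs_le (n : ℕ) (t : ℝ) : |Ps n t| ≤ amp n := by
  by_cases h : ∃ σ : List Bool, σ.length = n ∧ t ∈ Ioo (ga σ) (gb σ)
  · obtain ⟨σ, hlen, hσ⟩ := h
    subst hlen
    rw [Ps_eq_single hσ]
    exact psig_abs_le_amp σ t
  · push_neg at h
    have : Ps n t = 0 := by
      refine Finset.sum_eq_zero fun τ hτ => psig_zero_of_notin (h τ (mem_Lists.mp hτ))
    rw [this, abs_zero]
    exact (amp_pos n).le

lemma Ps_cont (n : ℕ) : Continuous (Ps n) :=
  continuous_finset_sum _ fun σ _ => psig_cont σ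

def psi (t : ℝ) : ℝ := ∑' n, Ps n t

lemma summable_amp : Summable amp :=
  summable_geometric_of_lt_one (by norm_num) (by norm_num)

lemma psi_cont : Continuous psi := by
  refine continuous_tsum Ps_cont summable_amp (fun n t => ?_)
  rw [Real.norm_eq_abs]
  exact Ps_abs_le n t

lemma psi_eq {σ : List Bool} {t : ℝ} (hσ : t ∈ Ioo (ga σ) (gb σ)) :
    psi t = psig σ t := by
  rw [psi, tsum_eq_single σ.length (fun m hm => Ps_zero_of_len hσ hm)]
  exact Ps_eq_single hσ

lemma psi_zero {t : ℝ} (h : ∀ σ : List Bool, t ∉ Ioo (ga σ) (gb σ)) : psi t = 0 := by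
  rw [psi]
  rw [tsum_congr (fun n => Ps_zero (n := n) h)]
  exact tsum_zero

def fn (t : ℝ) : ℝ := FF t + psi t

lemma fn_cont : Continuous fn := FF_cont.add psi_cont

lemma gap_subset_Icc (σ : List Bool) : Icc (ga σ) (gb σ) ⊆ Icc (0:ℝ) 1 := by
  intro t ht
  have h1 := (ga_mem σ).1
  have h2 := gb_lt_Ib σ
  have h3 := Ib_le_one σ
  exact ⟨le_trans h1 ht.1, le_trans ht.2 (by linarith)⟩

lemma fn_gap {σ : List Bool} {t : ℝ} (ht : t ∈ Ioo (ga σ) (gb σ)) :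
    fn t = vv σ + psig σ t := by
  rw [fn, psi_eq ht, FF_gap_val ⟨ht.1.le, ht.2.le⟩]

lemma fn_nongap {t : ℝ} (h : ∀ σ : List Bool, t ∉ Ioo (ga σ) (gb σ)) : fn t = FF t := by
  rw [fn, psi_zero h, add_zero]

lemma fn_mapsTo : MapsTo fn (Icc (0:ℝ) 1) (Icc (0:ℝ) 1) := by
  intro x hx
  by_cases h : ∃ σ : List Bool, x ∈ Ioo (ga σ) (gb σ)
  · obtain ⟨σ, hσ⟩ := h
    rw [fn_gap hσ]
    have hb := psig_bounds σ x
    have h1 : dd σ ≤ vv σ := min_le_left _ _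
    have h2 : uu σ ≤ 1 - vv σ := min_le_left _ _
    constructor
    · linarith [hb.1]
    · linarith [hb.2]
  · push_neg at h
    rw [fn_nongap h]
    exact FF_mem hx


/-! ### level sets -/

lemma digits : ∀ (n : ℕ) {y : ℝ}, y ∈ Icc (0:ℝ) 1 →
    ∃ σ : List Bool, σ.length = n ∧ val σ ≤ y ∧ y ≤ val σ + amp n := by
  intro n
  induction n with
  | zero =>
    intro y hy
    exact ⟨[], rfl, by simpa [val, valA] using hy.1, by simpa [val, valA, amp] using hy.2⟩
  | succ k ih =>
    intro y hy
    obtain ⟨σ, hlen, h1, h2⟩ := ih hy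
    rcases le_total y (val σ + amp (k+1)) with h | h
    · refine ⟨σ ++ [false], by simp [hlen], ?_, ?_⟩
      · rwa [val_snoc_false]
      · rwa [val_snoc_false]
    · refine ⟨σ ++ [true], by simp [hlen], ?_, ?_⟩
      · rw [val_snoc_true, hlen]
        exact h.trans_eq' (by rw [amp]) |>.trans_eq rfl
      · rw [val_snoc_true, hlen]
        have ha := amp_succ k
        have : amp (k+1) = (1/2:ℝ)^(k+1) := rfl
        linarith

lemma exists_witness {y : ℝ} (hy : y ∈ Icc (0:ℝ) 1) (n : ℕ) :
    ∃ x σ, (σ : List Bool).length = n ∧ x ∈ Ioo (ga σ) (gb σ) ∧ fn x = y := by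
  obtain ⟨σ, hlen, h1, h2⟩ := digits n hy
  have hvd : vv σ - dd σ ≤ y := by
    have hle : vv σ - y ≤ dd σ := by
      refine le_min (by linarith [hy.1]) ?_
      have : vv σ - val σ = (1/2:ℝ)^(σ.length+1) := by rw [vv]; ring
      have hh : (1/2:ℝ)^(σ.length+1) ≤ amp σ.length := by
        rw [amp, pow_succ]
        nlinarith [pow_pos (show (0:ℝ) < 1/2 by norm_num) σ.length]
      rw [hlen] at *
      linarith
    linarith
  have hvu : y ≤ vv σ + uu σ := by
    have hle : y - vv σ ≤ uu σ := by
      refine le_min (by linarith [hy.2]) ?_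
      have h3 : y ≤ val σ + amp σ.length := by rw [hlen]; exact h2
      have : vv σ = val σ + (1/2:ℝ)^(σ.length+1) := rfl
      have hh : (0:ℝ) < (1/2:ℝ)^(σ.length+1) := by positivity
      linarith
    linarith
  have hq1 : q1 σ ∈ Ioo (ga σ) (gb σ) :=
    ⟨ga_lt_q1 σ, lt_trans (q1_lt_md σ) (md_lt_gb σ)⟩
  have hq3 : q3 σ ∈ Ioo (ga σ) (gb σ) :=
    ⟨lt_trans (ga_lt_md σ) (md_lt_q3 σ), q3_lt_gb σ⟩
  have hfq1 : fn (q1 σ) = vv σ - dd σ := by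
    rw [fn_gap hq1, psig_q1]; ring
  have hfq3 : fn (q3 σ) = vv σ + uu σ := by
    rw [fn_gap hq3, psig_q3]
  have hq13 : q1 σ ≤ q3 σ :=
    le_trans (q1_lt_md σ).le (md_lt_q3 σ).le
  have hy' : y ∈ Icc (fn (q1 σ)) (fn (q3 σ)) := by
    rw [hfq1, hfq3]; exact ⟨hvd, hvu⟩
  obtain ⟨x, hxmem, hxval⟩ := intermediate_value_Icc hq13 fn_cont.continuousOn hy'
  refine ⟨x, σ, hlen, ⟨lt_of_lt_of_le (ga_lt_q1 σ) hxmem.1,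
    lt_of_le_of_lt hxmem.2 (q3_lt_gb σ)⟩, hxval⟩

lemma level_inf : ∀ y ∈ Icc (0:ℝ) 1, (Icc (0:ℝ) 1 ∩ fn ⁻¹' {y}).Infinite := by
  intro y hy
  have H : ∀ n : ℕ, ∃ x σ, (σ : List Bool).length = n ∧ x ∈ Ioo (ga σ) (gb σ) ∧ fn x = y :=
    exists_witness hy
  choose w σf hlen hmem hval using H
  refine Set.infinite_of_injective_forall_mem (f := w) ?_ ?_
  · intro n m hnm
    by_contra hne
    have h1 : σf n ≠ σf m := by
      intro h
      have := hlen n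
      rw [h, hlen m] at this
      exact hne this.symm
    exact gap_disjoint h1 (hnm ▸ hmem n) (hmem m) |>.elim
  · intro n
    refine ⟨gap_subset_Icc (σf n) ⟨(hmem n).1.le, (hmem n).2.le⟩, ?_⟩
    simp [hval n]

/-! ### oscillation bound -/

lemma amp_max_eq (a b : ℕ) : amp (max a b) = min (amp a) (amp b) := by
  rcases le_total a b with h | h
  · rw [max_eq_right h, min_eq_right (amp_anti h)]
  · rw [max_eq_left h, min_eq_left (amp_anti h)]

lemma osc_main : ∀ x ∈ Icc (0:ℝ) 1, ∃ C : ℝ, 0 < C ∧ ∀ ε > 0, ∃ r, 0 < r ∧ r < ε ∧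
    ∀ y ∈ Icc (0:ℝ) 1, |y - x| ≤ r → |fn y - fn x| ≤ C * r := by
  intro x hx
  by_cases hgap : ∃ σ : List Bool, x ∈ Ioo (ga σ) (gb σ)
  · obtain ⟨σ, hσ⟩ := hgap
    refine ⟨SS σ + 1, by have := SS_nonneg σ; linarith, ?_⟩
    intro ε hε
    refine ⟨min (min (ε/2) ((x - ga σ)/2)) ((gb σ - x)/2), ?_, ?_, ?_⟩
    · have h1 := hσ.1; have h2 := hσ.2
      simp only [lt_min_iff]
      exact ⟨⟨by linarith, by linarith⟩, by linarith⟩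
    · calc min (min (ε/2) ((x - ga σ)/2)) ((gb σ - x)/2) ≤ ε/2 :=
          le_trans (min_le_left _ _) (min_le_left _ _)
        _ < ε := by linarith
    · intro y _ hyr
      set r := min (min (ε/2) ((x - ga σ)/2)) ((gb σ - x)/2) with hr
      have hra : r ≤ (x - ga σ)/2 := le_trans (min_le_left _ _) (min_le_right _ _)
      have hrb : r ≤ (gb σ - x)/2 := min_le_right _ _
      have habs := abs_le.mp hyr
      have hyIoo : y ∈ Ioo (ga σ) (gb σ) := by
        constructor
        · have := hσ.1; linarith [habs.1]
        · have := hσ.2; linarith [habs.2]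
      rw [fn_gap hyIoo, fn_gap hσ]
      have h1 : |(vv σ + psig σ y) - (vv σ + psig σ x)| = |psig σ y - psig σ x| := by
        congr 1; ring
      rw [h1]
      refine le_trans (psig_lip σ x y) ?_
      have h2 : |y - x| ≤ r := hyr
      have h3 : (0:ℝ) ≤ r := le_trans (abs_nonneg _) h2
      nlinarith [SS_nonneg σ, abs_nonneg (y - x)]
  · push_neg at hgap
    obtain ⟨SL, hSL0, hSL⟩ : ∃ SL : ℝ, 0 ≤ SL ∧ ∀ σ : List Bool, ga σ = x → SS σ ≤ SL := by
      by_cases h : ∃ σ : List Bool, ga σ = x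
      · obtain ⟨σ0, h0⟩ := h
        refine ⟨SS σ0, SS_nonneg σ0, fun σ hσ => ?_⟩
        have : σ = σ0 := ga_inj (by rw [hσ, h0])
        rw [this]
      · exact ⟨0, le_rfl, fun σ h' => absurd ⟨σ, h'⟩ h⟩
    obtain ⟨SR, hSR0, hSR⟩ : ∃ SR : ℝ, 0 ≤ SR ∧ ∀ σ : List Bool, gb σ = x → SS σ ≤ SR := by
      by_cases h : ∃ σ : List Bool, gb σ = x
      · obtain ⟨σ0, h0⟩ := h
        refine ⟨SS σ0, SS_nonneg σ0, fun σ hσ => ?_⟩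
        have : σ = σ0 := gb_inj (by rw [hσ, h0])
        rw [this]
      · exact ⟨0, le_rfl, fun σ h' => absurd ⟨σ, h'⟩ h⟩
    refine ⟨SL + SR + 42, by linarith, ?_⟩
    intro ε hε
    by_contra hbad
    push_neg at hbad
    have extract : ∀ r : ℝ, 0 < r → r < ε → ∃ σ : List Bool, ∃ yy : ℝ,
        yy ∈ Ioo (ga σ) (gb σ) ∧ |yy - x| ≤ r ∧ 40 * r < amp σ.length ∧
        0 < max (ga σ - x) (x - gb σ) ∧ max (ga σ - x) (x - gb σ) ≤ r := by
      intro r hr hrε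
      obtain ⟨y, hyIcc, hyr, hyosc⟩ := hbad r hr hrε
      have hfx : fn x = FF x := fn_nongap hgap
      have hFlip := FF_lip x y
      have hdecomp : fn y - fn x = (FF y - FF x) + psi y := by
        rw [hfx]; simp only [fn]; ring
      have hpsiy : (SL + SR + 40) * r < |psi y| := by
        have h1 : |fn y - fn x| ≤ |FF y - FF x| + |psi y| := by
          rw [hdecomp]; exact abs_add_le _ _
        have h2 : |FF y - FF x| ≤ 2 * r := by
          refine le_trans (FF_lip x y) ?_
          rw [abs_sub_comm] at hyr ⊢
          linarith [hyr]
        nlinarith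
      have hy0 : psi y ≠ 0 := by
        intro h
        rw [h, abs_zero] at hpsiy
        nlinarith
      have hyin : ∃ σ : List Bool, y ∈ Ioo (ga σ) (gb σ) := by
        by_contra hno
        push_neg at hno
        exact hy0 (psi_zero hno)
      obtain ⟨σ, hyσ⟩ := hyin
      have hpsig : psi y = psig σ y := psi_eq hyσ
      have habs := abs_le.mp hyr
      have hne1 : ga σ ≠ x := by
        intro h
        have hs := psig_le_slope_left σ y
        have hmax : max 0 (y - ga σ) ≤ r := by
          rw [h]
          refine max_le (by linarith) (by linarith [habs.2])
        have : |psig σ y| ≤ SL * r := by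
          refine le_trans hs ?_
          have := hSL σ h
          nlinarith [SS_nonneg σ, le_max_left (0:ℝ) (y - ga σ)]
        rw [hpsig] at hpsiy
        nlinarith
      have hne2 : gb σ ≠ x := by
        intro h
        have hs := psig_le_slope_right σ y
        have hmax : max 0 (gb σ - y) ≤ r := by
          rw [h]
          refine max_le (by linarith) (by linarith [habs.1])
        have : |psig σ y| ≤ SR * r := by
          refine le_trans hs ?_
          have := hSR σ h
          nlinarith [SS_nonneg σ, le_max_left (0:ℝ) (gb σ - y)]
        rw [hpsig] at hpsiy
        nlinarith
      have hamp : 40 * r < amp σ.length := by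
        have := psig_abs_le_amp σ y
        rw [hpsig] at hpsiy
        nlinarith
      have hd : 0 < max (ga σ - x) (x - gb σ) := by
        have hxgap := hgap σ
        rw [mem_Ioo, not_and_or] at hxgap
        rcases hxgap with h | h
        · have h' : x ≤ ga σ := not_lt.mp h
          have : x < ga σ := lt_of_le_of_ne h' (fun hh => hne1 hh.symm)
          exact lt_max_of_lt_left (by linarith)
        · have h' : gb σ ≤ x := not_lt.mp h
          have : gb σ < x := lt_of_le_of_ne h' hne2
          exact lt_max_of_lt_right (by linarith)
      have hdr : max (ga σ - x) (x - gb σ) ≤ r := by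
        refine max_le ?_ ?_
        · have := hyσ.1; linarith [habs.2]
        · have := hyσ.2; linarith [habs.1]
      exact ⟨σ, y, hyσ, hyr, hamp, hd, hdr⟩
    obtain ⟨σ1, y1, hy1, hy1r, hamp1, hd1pos, hd1r⟩ :=
      extract (ε/2) (by linarith) (by linarith)
    set d1 := max (ga σ1 - x) (x - gb σ1) with hd1
    obtain ⟨σ2, y2, hy2, hy2r, hamp2, hd2pos, hd2r⟩ :=
      extract (d1/2) (by linarith) (by linarith)
    have hne : σ2 ≠ σ1 := by
      intro h
      rw [h] at hd2r
      rw [← hd1] at hd2r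
      linarith
    set z1 := max (ga σ1) (min x (gb σ1)) with hz1def
    have hgagb := (ga_lt_gb σ1).le
    have hz1 : z1 ∈ Icc (ga σ1) (gb σ1) := by
      constructor
      · exact le_max_left _ _
      · exact max_le hgagb (min_le_right _ _)
    have hz1d : |x - z1| ≤ d1 := by
      rcases le_total x (ga σ1) with h | h
      · have hmin : min x (gb σ1) = x := min_eq_left (le_trans h hgagb)
        rw [hz1def, hmin, max_eq_left h]
        rw [abs_sub_comm, abs_of_nonneg (by linarith)]
        exact le_max_left _ _
      · rcases le_total (gb σ1) x with h' | h'
        · have hmin : min x (gb σ1) = gb σ1 := min_eq_right h'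
          rw [hz1def, hmin, max_eq_right hgagb]
          rw [abs_of_nonneg (by linarith)]
          exact le_max_right _ _
        · have hmin : min x (gb σ1) = x := min_eq_left h'
          rw [hz1def, hmin, max_eq_right h]
          simpa using le_of_lt hd1pos
    have hsep := sep_points hne ⟨hy2.1.le, hy2.2.le⟩ hz1
    have hel : 4 * (5 * d1) < 4 * el (max σ2.length σ1.length + 1) := by
      have h1 := amp_le_four_el (max σ2.length σ1.length)
      have h2 : amp (max σ2.length σ1.length) = min (amp σ2.length) (amp σ1.length) :=
        amp_max_eq _ _
      have h3 : 20 * d1 < min (amp σ2.length) (amp σ1.length) := by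
        refine lt_min ?_ ?_
        · linarith
        · linarith
      linarith
    have hupper : |y2 - z1| ≤ d1/2 + d1 := by
      calc |y2 - z1| ≤ |y2 - x| + |x - z1| := by
            have := abs_sub_le y2 x z1
            linarith
        _ ≤ d1/2 + d1 := add_le_add hy2r hz1d
    have hcomm := abs_sub_comm z1 y2
    linarith

end SO
end

/-- There exists a continuous function `f : [0,1] → [0,1]` with finite lower-scaled
oscillation at every point, all of whose level sets are infinite. -/
theorem stmt0 :
    ∃ f : ℝ → ℝ,
      ContinuousOn f (Set.Icc 0 1) ∧
      Set.MapsTo f (Set.Icc 0 1) (Set.Icc 0 1) ∧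
      (∀ x ∈ Set.Icc (0:ℝ) 1, lowerScaledOsc (Set.Icc 0 1) f x < ⊤) ∧
      (∀ y ∈ Set.Icc (0:ℝ) 1, (Set.Icc (0:ℝ) 1 ∩ f ⁻¹' {y}).Infinite) := by
  refine ⟨SO.fn, SO.fn_cont.continuousOn, SO.fn_mapsTo, ?_, SO.level_inf⟩
  intro x hx
  obtain ⟨C, hC, hgood⟩ := SO.osc_main x hx
  have hlt : ENNReal.ofReal C < ⊤ := ENNReal.ofReal_lt_top
  refine lt_of_le_of_lt (Filter.liminf_le_of_frequently_le'
    (x := ENNReal.ofReal C) ?_) hlt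
  rw [Filter.frequently_iff]
  intro U hU
  obtain ⟨u, hu, hsub⟩ := mem_nhdsGT_iff_exists_Ioo_subset.mp hU
  obtain ⟨r, hr0, hru, hbound⟩ := hgood u hu
  refine ⟨r, hsub ⟨hr0, hru⟩, ?_⟩
  have hsup : (⨆ (y : ℝ) (_ : y ∈ Set.Icc (0:ℝ) 1) (_ : dist y x ≤ r),
      ENNReal.ofReal (dist (SO.fn y) (SO.fn x))) ≤ ENNReal.ofReal (C * r) := by
    refine iSup_le fun y => iSup_le fun hy => iSup_le fun hd => ?_
    apply ENNReal.ofReal_le_ofReal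
    rw [Real.dist_eq]
    rw [Real.dist_eq] at hd
    exact hbound y hy hd
  refine le_trans (ENNReal.div_le_div_right hsup _) ?_
  rw [ENNReal.div_le_iff (by simpa using hr0) ENNReal.ofReal_ne_top]
  rw [← ENNReal.ofReal_mul hC.le]
end

section
/- Let f : [0,1]^m → ℝ be a continuous function such that the lower-scaled oscillation l_f(x) is finite for every x ∈ [0,1]^m. Then the graph G_f([0,1]^m) = {(x, f(x)) : x ∈ [0,1]^m} ⊂ ℝ^{m+1} has σ-finite m-dimensional Hausdorff measure. -/
open Set MeasureTheory Metric Filter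
open scoped ENNReal NNReal Topology

lemma osc_witness {E F : Type*} [PseudoMetricSpace E] [PseudoMetricSpace F]
    {A : Set E} {f : E → F} {x : E} {N : ℕ}
    (h : lowerScaledOsc A f x < N) {δ : ℝ} (hδ : 0 < δ) :
    ∃ r : ℝ, 0 < r ∧ r < δ ∧ ∀ y ∈ A, dist y x ≤ r → dist (f y) (f x) ≤ N * r := by
  have hfreq := Filter.frequently_lt_of_liminf_lt (by isBoundedDefault) h
  have hev : ∀ᶠ r : ℝ in nhdsWithin 0 (Set.Ioi 0), r ∈ Set.Ioo 0 δ :=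
    Filter.eventually_of_mem (Ioo_mem_nhdsGT_of_mem ⟨le_refl _, hδ⟩) (fun _ h => h)
  obtain ⟨r, hlt, hr0, hrδ⟩ := (hfreq.and_eventually hev).exists
  refine ⟨r, hr0, hrδ, fun y hy hyx => ?_⟩
  have hdiv : (⨆ (y : E) (_ : y ∈ A) (_ : dist y x ≤ r), ENNReal.ofReal (dist (f y) (f x)))
      < (N : ℝ≥0∞) * ENNReal.ofReal r := by
    rw [← ENNReal.div_lt_iff (Or.inl (by simp [hr0])) (Or.inl ENNReal.ofReal_ne_top)]
    exact hlt
  have hle : ENNReal.ofReal (dist (f y) (f x)) <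
      (N : ℝ≥0∞) * ENNReal.ofReal r := by
    refine lt_of_le_of_lt ?_ hdiv
    exact le_iSup_of_le y (le_iSup_of_le hy (le_iSup_of_le hyx le_rfl))
  have : (N : ℝ≥0∞) * ENNReal.ofReal r = ENNReal.ofReal (N * r) := by
    rw [ENNReal.ofReal_mul (by positivity)]
    simp
  rw [this] at hle
  exact le_of_lt ((ENNReal.ofReal_lt_ofReal_iff_of_nonneg dist_nonneg).1 hle)

lemma ediam_closedBall_le {X : Type*} [PseudoMetricSpace X] (c : X) (ρ : ℝ) :
    EMetric.diam (Metric.closedBall c ρ) ≤ ENNReal.ofReal (2 * ρ) := by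
  apply EMetric.diam_le
  intro x hx y hy
  rw [edist_dist]
  apply ENNReal.ofReal_le_ofReal
  calc dist x y ≤ dist x c + dist c y := dist_triangle x c y
    _ ≤ ρ + ρ := add_le_add (mem_closedBall.1 hx) (by
        rw [dist_comm]; exact mem_closedBall.1 hy)
    _ = 2 * ρ := by ring

lemma graph_bound (m N : ℕ) (f : (Fin m → ℝ) → ℝ) (A : Set (Fin m → ℝ))
    (hA : A ⊆ Set.Icc 0 1)
    (hosc : ∀ x ∈ A, ∀ δ : ℝ, 0 < δ → ∃ r : ℝ, 0 < r ∧ r < δ ∧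
      ∀ y ∈ Set.Icc (0 : Fin m → ℝ) 1, dist y x ≤ r → dist (f y) (f x) ≤ N * r) :
    μH[(m : ℝ)] ((fun x => (x, f x)) '' A) ≤ (2 * N + 1) * 12 ^ m := by
  rw [MeasureTheory.Measure.hausdorffMeasure_apply]
  refine iSup₂_le fun ε hε => ?_
  -- choose a real scale δ
  obtain ⟨δ, hδ0, hδhalf, hδε⟩ : ∃ δ : ℝ, 0 < δ ∧ δ ≤ 1/2 ∧ ENNReal.ofReal (2 * δ) ≤ ε := by
    rcases eq_or_ne ε ⊤ with rfl | hne
    · exact ⟨1/2, by norm_num, le_refl _, le_top⟩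
    · have htp : 0 < ε.toReal := ENNReal.toReal_pos hε.ne' hne
      refine ⟨min (1/2) (ε.toReal/4), by positivity, min_le_left _ _, ?_⟩
      calc ENNReal.ofReal (2 * min (1/2) (ε.toReal/4))
          ≤ ENNReal.ofReal ε.toReal := by
            apply ENNReal.ofReal_le_ofReal
            have := min_le_right (1/2 : ℝ) (ε.toReal/4)
            linarith
        _ = ε := ENNReal.ofReal_toReal hne
  -- choose radii
  choose! r hr0 hrδ hrosc using fun x (hx : x ∈ A) => hosc x hx δ hδ0
  -- Vitali
  obtain ⟨u, huA, hudisj, hucov⟩ :=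
    Vitali.exists_disjoint_subfamily_covering_enlargement_closedBall A id (fun x => r x / 4) 1
      (fun a ha => by have := (hrδ a ha); have := hr0 a ha; show r a / 4 ≤ 1; linarith) 4 (by norm_num)
  simp only [id_eq] at hudisj hucov
  have hrpos : ∀ b ∈ u, 0 < r b := fun b hb => hr0 b (huA hb)
  -- covering of A by the enlarged balls
  have hcov : ∀ a ∈ A, ∃ b ∈ u, a ∈ closedBall b (r b) := by
    intro a ha
    obtain ⟨b, hbu, hsub⟩ := hucov a ha
    refine ⟨b, hbu, ?_⟩
    have : a ∈ closedBall a (r a / 4) :=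
      mem_closedBall_self (by have := hr0 a ha; linarith)
    have h4 : (4 : ℝ) * (r b / 4) = r b := by ring
    simpa [h4] using hsub this
  -- countability
  have hucount : u.Countable := by
    apply hudisj.countable_of_nonempty_interior
    intro b hb
    have : (ball b (r b / 4)).Nonempty :=
      Metric.nonempty_ball.2 (by have := hrpos b hb; linarith)
    exact this.mono ball_subset_interior_closedBall
  haveI := hucount.to_subtype
  -- volume estimate
  have hsum0 : ∑' (b : u), volume (closedBall (b : Fin m → ℝ) (r b / 4))
      ≤ ENNReal.ofReal 3 ^ m := by
    rw [← measure_biUnion (f := fun b => closedBall b (r b / 4)) hucount hudisj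
      (fun b _ => measurableSet_closedBall)]
    have hIcc : (⋃ b ∈ u, closedBall (b) (r b / 4)) ⊆
        Set.Icc (fun _ => (-1 : ℝ)) (fun _ => (2 : ℝ)) := by
      intro y hy
      simp only [mem_iUnion] at hy
      obtain ⟨b, hb, hyb⟩ := hy
      have hb1 : b ∈ Set.Icc (0 : Fin m → ℝ) 1 := hA (huA hb)
      have hd : dist y b ≤ r b / 4 := mem_closedBall.1 hyb
      have hrb : r b < 1/2 := lt_of_lt_of_le (hrδ b (huA hb)) hδhalf
      constructor <;> intro i
      · have h1 : dist (y i) (b i) ≤ r b / 4 := le_trans (dist_le_pi_dist y b i) hd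
        have h2 : (0 : ℝ) ≤ b i := hb1.1 i
        have := abs_le.1 (by simpa [Real.dist_eq] using h1)
        simp only; linarith [this.1]
      · have h1 : dist (y i) (b i) ≤ r b / 4 := le_trans (dist_le_pi_dist y b i) hd
        have h2 : b i ≤ 1 := hb1.2 i
        have := abs_le.1 (by simpa [Real.dist_eq] using h1)
        simp only; linarith [this.2]
    calc volume (⋃ b ∈ u, closedBall b (r b / 4))
        ≤ volume (Set.Icc (fun _ => (-1 : ℝ)) (fun _ => (2 : ℝ)) : Set (Fin m → ℝ)) :=
          measure_mono hIcc
      _ = ENNReal.ofReal 3 ^ m := by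
          rw [Real.volume_Icc_pi]
          norm_num
  have hsum1 : ∑' (b : u), ENNReal.ofReal (r ↑b / 2) ^ m ≤ ENNReal.ofReal 3 ^ m := by
    refine le_trans (le_of_eq ?_) hsum0
    congr 1
    funext b
    rw [Real.volume_pi_closedBall _ (by have := hrpos b b.2; positivity : (0:ℝ) ≤ r ↑b / 4)]
    rw [ENNReal.ofReal_pow (by have := hrpos b b.2; positivity), Fintype.card_fin]
    congr 2
    ring
  have hsum2 : ∑' (b : u), (2 * ENNReal.ofReal (r ↑b)) ^ m ≤ 12 ^ m := by
    have key : ∀ b : u, (2 * ENNReal.ofReal (r ↑b)) ^ m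
        = 4 ^ m * ENNReal.ofReal (r ↑b / 2) ^ m := by
      intro b
      have h1 : ENNReal.ofReal (r ↑b) = 2 * ENNReal.ofReal (r ↑b / 2) := by
        rw [← ENNReal.ofReal_ofNat 2, ← ENNReal.ofReal_mul (by norm_num)]
        congr 1
        ring
      rw [h1, ← mul_pow, ← mul_assoc]
      norm_num
    calc ∑' (b : u), (2 * ENNReal.ofReal (r ↑b)) ^ m
        = 4 ^ m * ∑' (b : u), ENNReal.ofReal (r ↑b / 2) ^ m := by
          rw [ENNReal.tsum_mul_left.symm]; exact tsum_congr key
      _ ≤ 4 ^ m * ENNReal.ofReal 3 ^ m := by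
          exact mul_le_mul_right hsum1 _
      _ = 12 ^ m := by
          rw [← mul_pow]
          norm_num [ENNReal.ofReal_ofNat]
  -- build the cover
  classical
  obtain ⟨enc, henc⟩ := Countable.exists_injective_nat (↥u × Fin (2 * N + 1))
  let v : ↥u × Fin (2 * N + 1) → Set ((Fin m → ℝ) × ℝ) := fun j =>
    closedBall (j.1 : Fin m → ℝ) (r j.1) ×ˢ
      Set.Icc (f j.1 - N * r j.1 + (j.2 : ℕ) * r j.1)
        (f j.1 - N * r j.1 + ((j.2 : ℕ) + 1) * r j.1)
  let t : ℕ → Set ((Fin m → ℝ) × ℝ) := fun n =>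
    if h : ∃ j, enc j = n then v h.choose else ∅
  have hvsub : ∀ j, v j ⊆ closedBall ((j.1 : Fin m → ℝ),
      f j.1 - N * r j.1 + (j.2 : ℕ) * r j.1 + r j.1 / 2) (r j.1) := by
    intro j
    rw [← closedBall_prod_same]
    apply Set.prod_mono Set.Subset.rfl
    rw [Real.closedBall_eq_Icc]
    have hr := hrpos _ j.1.2
    apply Set.Icc_subset_Icc <;> nlinarith
  have hvdiam : ∀ j, EMetric.diam (v j) ≤ 2 * ENNReal.ofReal (r j.1) := by
    intro j
    refine le_trans (EMetric.diam_mono (hvsub j)) ?_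
    refine le_trans (ediam_closedBall_le _ _) ?_
    rw [ENNReal.ofReal_mul (by norm_num)]
    simp
  have hdiam : ∀ n, EMetric.diam (t n) ≤ ε := by
    intro n
    simp only [t]
    split
    · next h =>
      refine le_trans (hvdiam h.choose) ?_
      have h1 : r (h.choose.1 : Fin m → ℝ) ≤ δ := (hrδ _ (huA h.choose.1.2)).le
      calc 2 * ENNReal.ofReal (r h.choose.1) ≤ 2 * ENNReal.ofReal δ :=
            mul_le_mul_right (ENNReal.ofReal_le_ofReal h1) _
        _ = ENNReal.ofReal (2 * δ) := by
            rw [ENNReal.ofReal_mul (by norm_num)]; simp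
        _ ≤ ε := hδε
    · exact le_of_eq_of_le EMetric.diam_empty zero_le
  have hcover : (fun x => (x, f x)) '' A ⊆ ⋃ n, t n := by
    rintro p ⟨x, hx, rfl⟩
    obtain ⟨b, hbu, hxb⟩ := hcov x hx
    have hr : 0 < r b := hrpos b hbu
    have hdist : dist (f x) (f b) ≤ N * r b :=
      hrosc b (huA hbu) x (hA hx) (mem_closedBall.1 hxb)
    have habs := abs_le.1 (by simpa [Real.dist_eq] using hdist)
    have h1 : f b - N * r b ≤ f x := by linarith [habs.1]
    have h2 : f x ≤ f b - N * r b + 2 * N * r b := by linarith [habs.2]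
    set q : ℝ := (f x - (f b - N * r b)) / r b with hqdef
    have hq0 : 0 ≤ q := div_nonneg (by linarith) hr.le
    have hqle : q ≤ 2 * N := by
      rw [hqdef, div_le_iff₀ hr]; linarith
    set k := ⌊q⌋₊ with hk
    have hkD : k < 2 * N + 1 := by
      have : k ≤ ⌊(2 * N : ℝ)⌋₊ := Nat.floor_le_floor hqle
      have h2N : ⌊(2 * N : ℝ)⌋₊ = 2 * N := by
        rw [show (2 * N : ℝ) = ((2 * N : ℕ) : ℝ) by push_cast; ring, Nat.floor_natCast]
      omega
    have hmem1 : f b - N * r b + k * r b ≤ f x := by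
      have := Nat.floor_le hq0
      rw [hqdef, le_div_iff₀ hr] at this
      linarith
    have hmem2 : f x ≤ f b - N * r b + (k + 1) * r b := by
      have := Nat.lt_floor_add_one q
      rw [hqdef, div_lt_iff₀ hr] at this
      push_cast at this ⊢
      linarith
    refine mem_iUnion.2 ⟨enc (⟨b, hbu⟩, ⟨k, hkD⟩), ?_⟩
    have hex : ∃ j, enc j = enc (⟨b, hbu⟩, ⟨k, hkD⟩) := ⟨_, rfl⟩
    have hch : hex.choose = (⟨b, hbu⟩, ⟨k, hkD⟩) := henc hex.choose_spec
    show (x, f x) ∈ t _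
    simp only [t, dif_pos hex, hch]
    exact ⟨hxb, hmem1, hmem2⟩
  refine le_trans (iInf_le_of_le t (iInf_le_of_le hcover (iInf_le_of_le hdiam le_rfl))) ?_
  set g : ℕ → ℝ≥0∞ := fun n => ⨆ _ : (t n).Nonempty, EMetric.diam (t n) ^ (m : ℝ) with hg
  have hsupp : Function.support g ⊆ Set.range enc := by
    intro n hn
    by_contra hmemb
    apply hn
    have hne : ¬∃ j, enc j = n := by
      simpa [Set.range, eq_comm] using hmemb
    simp only [hg, t, dif_neg hne]
    simp
  have hgle : ∀ j, g (enc j) ≤ (2 * ENNReal.ofReal (r j.1)) ^ m := by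
    intro j
    have hex : ∃ j', enc j' = enc j := ⟨j, rfl⟩
    have hch : hex.choose = j := henc hex.choose_spec
    simp only [hg, t, dif_pos hex, hch]
    refine iSup_le fun _ => ?_
    rw [← ENNReal.rpow_natCast (2 * ENNReal.ofReal (r j.1)) m]
    exact ENNReal.rpow_le_rpow (hvdiam j) (Nat.cast_nonneg m)
  calc ∑' n, ⨆ _ : (t n).Nonempty, EMetric.diam (t n) ^ (m : ℝ)
      = ∑' j : ↥u × Fin (2 * N + 1), g (enc j) := (henc.tsum_eq hsupp).symm
    _ ≤ ∑' j : ↥u × Fin (2 * N + 1), (2 * ENNReal.ofReal (r j.1)) ^ m :=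
        ENNReal.tsum_le_tsum hgle
    _ = ∑' (b : ↥u), ∑' (_ : Fin (2 * N + 1)), (2 * ENNReal.ofReal (r b)) ^ m :=
        ENNReal.tsum_prod'
    _ = ∑' (b : ↥u), (2 * N + 1 : ℕ) * (2 * ENNReal.ofReal (r b)) ^ m := by
        refine tsum_congr fun b => ?_
        rw [tsum_fintype]
        simp [Finset.sum_const, Finset.card_univ, nsmul_eq_mul]
    _ = (2 * N + 1 : ℕ) * ∑' (b : ↥u), (2 * ENNReal.ofReal (r b)) ^ m :=
        ENNReal.tsum_mul_left
    _ ≤ (2 * N + 1 : ℕ) * 12 ^ m := mul_le_mul_right hsum2 _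
    _ = (2 * N + 1) * 12 ^ m := by push_cast; ring

/-- If `f : [0,1]^m → ℝ` is continuous with finite lower-scaled oscillation at every
point, then the graph of `f` on `[0,1]^m` has σ-finite `H^m` measure in `ℝ^{m+1}`. -/
theorem stmt4 (m : ℕ) (f : (Fin m → ℝ) → ℝ)
    (hf : ContinuousOn f (Set.Icc 0 1))
    (hl : ∀ x ∈ Set.Icc (0 : Fin m → ℝ) 1, lowerScaledOsc (Set.Icc 0 1) f x < ⊤) :
    ∃ s : ℕ → Set ((Fin m → ℝ) × ℝ),
      ((fun x => (x, f x)) '' Set.Icc (0 : Fin m → ℝ) 1 ⊆ ⋃ n, s n) ∧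
      (∀ n, μH[(m : ℝ)] (s n) < ⊤) := by
  refine ⟨fun n => (fun x => (x, f x)) ''
    {x ∈ Set.Icc (0 : Fin m → ℝ) 1 | lowerScaledOsc (Set.Icc 0 1) f x < n}, ?_, ?_⟩
  · rintro p ⟨x, hx, rfl⟩
    obtain ⟨n, hn⟩ := ENNReal.exists_nat_gt (hl x hx).ne
    exact mem_iUnion.2 ⟨n, ⟨x, ⟨hx, hn⟩, rfl⟩⟩
  · intro n
    have hb := graph_bound m n f
      {x ∈ Set.Icc (0 : Fin m → ℝ) 1 | lowerScaledOsc (Set.Icc 0 1) f x < n}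
      (Set.sep_subset _ _)
      (fun x hx δ hδ => osc_witness hx.2 hδ)
    refine lt_of_le_of_lt hb ?_
    refine ENNReal.mul_lt_top ?_ ?_
    · exact lt_of_le_of_lt (le_refl _) (by
        have : (2 * (n : ℝ≥0∞) + 1) < ⊤ := by
          refine lt_of_le_of_lt (le_refl _) ?_
          exact ENNReal.add_lt_top.2 ⟨ENNReal.mul_lt_top ENNReal.ofNat_lt_top
            (ENNReal.natCast_lt_top n), ENNReal.one_lt_top⟩
        exact this)
    · exact ENNReal.pow_lt_top ENNReal.ofNat_lt_top
end

section
/- Let f : [0,1]^m → ℝ be a continuous function such that the lower-scaled oscillation l_f(x) is finite for every x ∈ [0,1]^m. Then for every set H ⊂ [0,1]^m with H^m(H) = 0, the graph G_f(H) = {(x, f(x)) : x ∈ H} satisfies H^m(G_f(H)) = 0. -/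
open Set MeasureTheory Metric Filter
open scoped ENNReal NNReal Topology

lemma key_aux (m n : ℕ) (f : (Fin m → ℝ) → ℝ) (s : Set (Fin m → ℝ))
    (hs : s ⊆ Set.Icc 0 1) (hvol : volume s = 0)
    (hn : ∀ x ∈ s, lowerScaledOsc (Set.Icc 0 1) f x < n) :
    μH[(m : ℝ)] ((fun x => (x, f x)) '' s : Set ((Fin m → ℝ) × ℝ)) = 0 := by
  set g : (Fin m → ℝ) → (Fin m → ℝ) × ℝ := fun x => (x, f x) with hg
  set C : ℝ≥0∞ := ((n : ℝ≥0∞) + 1) ^ m with hC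
  have hC0 : C ≠ 0 := pow_ne_zero _ (by simp)
  have hCt : C ≠ ⊤ := by
    simp [hC, ENNReal.pow_ne_top, ENNReal.add_ne_top]
  -- main estimate: for every ε ≠ 0, measure ≤ C * ε
  have main : ∀ ε : ℝ≥0∞, ε ≠ 0 → μH[(m : ℝ)] (g '' s) ≤ C * ε := by
    intro ε hε
    -- admissible radii
    set fr : (Fin m → ℝ) → Set ℝ := fun x =>
      {r : ℝ | 0 < r ∧
        (⨆ (y : Fin m → ℝ) (_ : y ∈ Set.Icc (0:Fin m → ℝ) 1) (_ : dist y x ≤ r),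
          ENNReal.ofReal (dist (f y) (f x))) ≤ (n : ℝ≥0∞) * ENNReal.ofReal r} with hfr
    have hadm : ∀ x ∈ s, ∀ δ > (0:ℝ), (fr x ∩ Ioo 0 δ).Nonempty := by
      intro x hx δ hδ
      have hfreq := Filter.frequently_lt_of_liminf_lt (h := hn x hx)
      have hmem : Ioo (0:ℝ) δ ∈ nhdsWithin (0:ℝ) (Set.Ioi 0) :=
        Ioo_mem_nhdsGT_of_mem ⟨le_refl 0, hδ⟩
      obtain ⟨r, hr1, hr2⟩ := (hfreq.and_eventually (eventually_of_mem hmem fun y hy => hy)).exists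
      refine ⟨r, ⟨hr2.1, ?_⟩, hr2⟩
      have h0 : ENNReal.ofReal r ≠ 0 := by
        simpa [ENNReal.ofReal_eq_zero, not_le] using hr2.1
      have := (ENNReal.div_lt_iff (Or.inl h0) (Or.inl ENNReal.ofReal_ne_top)).1 hr1
      exact this.le
    -- for each k, Besicovitch covering with radii < 1/(k+1)
    have bes : ∀ k : ℕ, ∃ (t : Set (Fin m → ℝ)) (rad : (Fin m → ℝ) → ℝ),
        t.Countable ∧ t ⊆ s ∧ (∀ x ∈ t, rad x ∈ fr x ∩ Ioo 0 (1/(k+1))) ∧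
        (s ⊆ ⋃ x ∈ t, closedBall x (rad x)) ∧
        (∑' x : t, volume (closedBall (x:Fin m → ℝ) (rad x))) ≤ volume s + ε := by
      intro k
      have hk : (0:ℝ) < 1/(k+1) := by positivity
      have hadm' : ∀ x ∈ s, ∀ δ > (0:ℝ),
          ((fr x ∩ Ioo 0 (1/(k+1))) ∩ Ioo 0 δ).Nonempty := by
        intro x hx δ hδ
        obtain ⟨r, hr1, hr2⟩ := hadm x hx (min δ (1/(k+1))) (lt_min hδ hk)
        exact ⟨r, ⟨⟨hr1, hr2.1, hr2.2.trans_le (min_le_right _ _)⟩,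
          hr2.1, hr2.2.trans_le (min_le_left _ _)⟩⟩
      obtain ⟨t, rad, h1, h2, h3, h4, h5⟩ :=
        Besicovitch.exists_closedBall_covering_tsum_measure_le (volume) hε
          (fun x => fr x ∩ Ioo 0 (1/(k+1))) s hadm'
      exact ⟨t, rad, h1, h2, h3, h4, h5⟩
    choose t rad ht1 ht2 ht3 ht4 ht5 using bes
    haveI : ∀ k : ℕ, Countable (t k) := fun k => (ht1 k).to_subtype
    -- diameter estimate for each ball
    have diam_est : ∀ (k : ℕ) (x : Fin m → ℝ), x ∈ t k →
        EMetric.diam (g '' (Set.Icc 0 1 ∩ closedBall x (rad k x)))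
          ≤ ((n : ℝ≥0∞) + 1) * ENNReal.ofReal (2 * rad k x) := by
      intro k x hx
      obtain ⟨⟨hr0, hsup⟩, hrI⟩ := ht3 k x hx
      apply EMetric.diam_le
      rintro _ ⟨y, ⟨hyI, hyB⟩, rfl⟩ _ ⟨z, ⟨hzI, hzB⟩, rfl⟩
      rw [Prod.edist_eq]
      have hfy : ENNReal.ofReal (dist (f y) (f x)) ≤ (n : ℝ≥0∞) * ENNReal.ofReal (rad k x) := by
        refine le_trans ?_ hsup
        exact le_iSup_of_le y (le_iSup_of_le hyI (le_iSup_of_le (mem_closedBall.1 hyB) le_rfl))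
      have hfz : ENNReal.ofReal (dist (f z) (f x)) ≤ (n : ℝ≥0∞) * ENNReal.ofReal (rad k x) := by
        refine le_trans ?_ hsup
        exact le_iSup_of_le z (le_iSup_of_le hzI (le_iSup_of_le (mem_closedBall.1 hzB) le_rfl))
      apply max_le
      · -- first coordinates
        have : dist y z ≤ 2 * rad k x := by
          have := dist_triangle y x z
          have h1 : dist y x ≤ rad k x := mem_closedBall.1 hyB
          have h2 : dist x z ≤ rad k x := by
            rw [dist_comm]; exact mem_closedBall.1 hzB
          linarith
        calc edist y z = ENNReal.ofReal (dist y z) := edist_dist _ _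
          _ ≤ ENNReal.ofReal (2 * rad k x) := ENNReal.ofReal_le_ofReal this
          _ ≤ _ := le_mul_of_one_le_left zero_le (by simp)
      · -- second coordinates
        calc edist (f y) (f z) ≤ edist (f y) (f x) + edist (f x) (f z) := edist_triangle _ _ _
          _ = ENNReal.ofReal (dist (f y) (f x)) + ENNReal.ofReal (dist (f z) (f x)) := by
              rw [edist_dist, edist_dist, dist_comm (f x)]
          _ ≤ (n : ℝ≥0∞) * ENNReal.ofReal (rad k x) + (n : ℝ≥0∞) * ENNReal.ofReal (rad k x) :=
              add_le_add hfy hfz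
          _ = (n : ℝ≥0∞) * ENNReal.ofReal (2 * rad k x) := by
              rw [ENNReal.ofReal_mul (by norm_num : (0:ℝ) ≤ 2), ENNReal.ofReal_ofNat]
              ring
          _ ≤ _ := by
              gcongr
              exact le_self_add
    -- apply the covering bound for Hausdorff measure
    have hμ := Measure.hausdorffMeasure_le_liminf_tsum (m : ℝ) (g '' s)
      (l := atTop) (r := fun k : ℕ => ((n : ℝ≥0∞) + 1) * ENNReal.ofReal (2 * (1/(k+1))))
      (t := fun k (i : t k) => g '' (Set.Icc 0 1 ∩ closedBall (i : Fin m → ℝ) (rad k i)))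
      ?_ ?_ ?_
    · -- now bound the liminf
      refine hμ.trans ?_
      have hbound : ∀ k : ℕ,
          (∑' i : t k, EMetric.diam (g '' (Set.Icc 0 1 ∩ closedBall (i : Fin m → ℝ) (rad k i)))
            ^ (m : ℝ)) ≤ C * ε := by
        intro k
        have step : ∀ i : t k,
            EMetric.diam (g '' (Set.Icc 0 1 ∩ closedBall (i : Fin m → ℝ) (rad k i))) ^ (m : ℝ)
              ≤ C * volume (closedBall (i : Fin m → ℝ) (rad k i)) := by
          intro i
          have hd := diam_est k i i.2
          have hr0 : (0:ℝ) < rad k i := (ht3 k i i.2).1.1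
          rw [ENNReal.rpow_natCast]
          calc EMetric.diam (g '' (Set.Icc 0 1 ∩ closedBall (i : Fin m → ℝ) (rad k i))) ^ m
              ≤ (((n : ℝ≥0∞) + 1) * ENNReal.ofReal (2 * rad k i)) ^ m := by
                exact pow_le_pow_left' hd m
            _ = C * (ENNReal.ofReal (2 * rad k i)) ^ m := by rw [mul_pow]
            _ = C * volume (closedBall (i : Fin m → ℝ) (rad k i)) := by
                rw [Real.volume_pi_closedBall _ hr0.le]
                congr 1
                rw [← ENNReal.ofReal_pow (by positivity)]
                simp
        calc (∑' i : t k, EMetric.diam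
              (g '' (Set.Icc 0 1 ∩ closedBall (i : Fin m → ℝ) (rad k i))) ^ (m : ℝ))
            ≤ ∑' i : t k, C * volume (closedBall (i : Fin m → ℝ) (rad k i)) :=
              ENNReal.tsum_le_tsum step
          _ = C * ∑' i : t k, volume (closedBall (i : Fin m → ℝ) (rad k i)) :=
              ENNReal.tsum_mul_left
          _ ≤ C * (volume s + ε) := by gcongr; exact ht5 k
          _ = C * ε := by rw [hvol, zero_add]
      calc Filter.liminf _ atTop ≤ Filter.liminf (fun _ : ℕ => C * ε) atTop :=
            Filter.liminf_le_liminf (Filter.Eventually.of_forall hbound)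
        _ = C * ε := Filter.liminf_const _
    · -- radii tend to 0
      have h1 : Filter.Tendsto (fun k : ℕ => 2 * (1/(k+1) : ℝ)) atTop (nhds 0) := by
        have := tendsto_one_div_add_atTop_nhds_zero_nat (𝕜 := ℝ)
        simpa using this.const_mul (2:ℝ)
      have h2 : Filter.Tendsto (fun k : ℕ => ENNReal.ofReal (2 * (1/(k+1) : ℝ))) atTop
          (nhds (ENNReal.ofReal 0)) := (ENNReal.continuous_ofReal.tendsto _).comp h1
      rw [ENNReal.ofReal_zero] at h2
      simpa using ENNReal.Tendsto.const_mul (a := (n : ℝ≥0∞) + 1) h2 (by simp)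
    · -- diameter bound eventually
      apply Filter.Eventually.of_forall
      intro k i
      refine (diam_est k i i.2).trans ?_
      refine mul_le_mul_right (ENNReal.ofReal_le_ofReal ?_) _
      have := (ht3 k i i.2).2.2.le
      linarith
    · -- covering eventually
      apply Filter.Eventually.of_forall
      intro k
      rintro _ ⟨x, hx, rfl⟩
      have := ht4 k hx
      simp only [mem_iUnion] at this
      obtain ⟨i, hi, hball⟩ := this
      refine mem_iUnion.2 ⟨⟨i, hi⟩, ?_⟩
      exact ⟨x, ⟨hs hx, hball⟩, rfl⟩
  -- conclude measure = 0
  refine le_antisymm ?_ zero_le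
  refine ENNReal.le_of_forall_pos_le_add fun η hη _ => ?_
  rw [zero_add]
  have hε : ((η : ℝ≥0∞) / C) ≠ 0 := by
    simp [ENNReal.div_eq_zero_iff, hCt, hη.ne']
  calc μH[(m:ℝ)] (g '' s) ≤ C * ((η : ℝ≥0∞) / C) := main _ hε
    _ = η := ENNReal.mul_div_cancel hC0 hCt

/-- If `f : [0,1]^m → ℝ` is continuous with finite lower-scaled oscillation at every
point, then the graph of `f` over any `H^m`-null set `H ⊆ [0,1]^m` is `H^m`-null. -/
theorem stmt5 (m : ℕ) (f : (Fin m → ℝ) → ℝ)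
    (hf : ContinuousOn f (Set.Icc 0 1))
    (hl : ∀ x ∈ Set.Icc (0 : Fin m → ℝ) 1, lowerScaledOsc (Set.Icc 0 1) f x < ⊤) :
    ∀ H : Set (Fin m → ℝ), H ⊆ Set.Icc 0 1 → μH[(m : ℝ)] H = 0 →
      μH[(m : ℝ)] ((fun x => (x, f x)) '' H : Set ((Fin m → ℝ) × ℝ)) = 0 := by
  intro H hH hH0
  have heq : (μH[(m : ℝ)] : Measure (Fin m → ℝ)) = volume := by
    simpa using (hausdorffMeasure_pi_real (ι := Fin m))
  have hHvol : volume H = 0 := by rw [← heq]; exact hH0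
  set s : ℕ → Set (Fin m → ℝ) :=
    fun n => {x ∈ H | lowerScaledOsc (Set.Icc 0 1) f x < n} with hsdef
  have hcov : H = ⋃ n, s n := by
    ext x
    simp only [mem_iUnion, hsdef, mem_setOf_eq]
    constructor
    · intro hx
      obtain ⟨n, hn⟩ := ENNReal.exists_nat_gt (hl x (hH hx)).ne
      exact ⟨n, hx, hn⟩
    · rintro ⟨n, hx, -⟩; exact hx
  have himg : (fun x => (x, f x)) '' H = ⋃ n, (fun x => (x, f x)) '' s n := by
    rw [← image_iUnion, ← hcov]
  rw [himg]
  refine le_antisymm ?_ zero_le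
  refine le_trans (measure_iUnion_le _) ?_
  have hzero : ∀ n : ℕ, μH[(m : ℝ)] ((fun x => (x, f x)) '' s n) = 0 := by
    intro n
    apply key_aux m n f (s n)
    · exact fun x hx => hH hx.1
    · exact measure_mono_null (fun x hx => hx.1) hHvol
    · exact fun x hx => hx.2
  simp [hzero]
end

section
/- Let m ≥ 1 and let f : [0,1]^m → ℝ be a continuous function such that the lower-scaled oscillation l_f(x) is finite for every x ∈ [0,1]^m. Then for Lebesgue-almost every y ∈ ℝ, the level set f⁻¹(y) has σ-finite (m−1)-dimensional Hausdorff measure. -/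
open Set MeasureTheory Metric Filter
open scoped ENNReal NNReal Topology

open scoped Classical in
/-- The set of points of `[0,1]^m` where `f` admits oscillation bound `k·r`
at arbitrarily small scales `r`. -/
def goodSet (m : ℕ) (f : (Fin m → ℝ) → ℝ) (k : ℕ) : Set (Fin m → ℝ) :=
  {x | x ∈ Set.Icc 0 1 ∧ ∀ δ : ℝ, 0 < δ → ∃ r : ℝ, 0 < r ∧ r ≤ δ ∧
    ∀ y ∈ Set.Icc (0 : Fin m → ℝ) 1, dist y x ≤ r → dist (f y) (f x) ≤ k * r}

open scoped Classical

lemma exists_goodSet (m : ℕ) (f : (Fin m → ℝ) → ℝ) (x : Fin m → ℝ)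
    (hx : x ∈ Set.Icc (0 : Fin m → ℝ) 1)
    (h : lowerScaledOsc (Set.Icc 0 1) f x < ⊤) : ∃ k : ℕ, x ∈ goodSet m f k := by
  obtain ⟨k, hk⟩ := ENNReal.exists_nat_gt h.ne
  set u : ℝ → ℝ≥0∞ := fun r =>
    (⨆ (y : Fin m → ℝ) (_ : y ∈ Set.Icc (0 : Fin m → ℝ) 1) (_ : dist y x ≤ r),
      ENNReal.ofReal (dist (f y) (f x))) / ENNReal.ofReal r with hu
  have freq : ∃ᶠ r in 𝓝[>] (0:ℝ), u r < k := by
    by_contra hc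
    rw [Filter.not_frequently] at hc
    have hc' : ∀ᶠ r in 𝓝[>] (0:ℝ), (k : ℝ≥0∞) ≤ u r := hc.mono fun r hr => not_lt.1 hr
    have : (k : ℝ≥0∞) ≤ lowerScaledOsc (Set.Icc 0 1) f x := by
      rw [lowerScaledOsc, Filter.liminf_eq]
      exact le_sSup hc'
    exact hk.not_ge this
  refine ⟨k, hx, fun δ hδ => ?_⟩
  obtain ⟨r, hur, hr⟩ := (freq.and_eventually
    (eventually_mem_set.2 (Ioc_mem_nhdsGT_of_mem ⟨le_rfl, hδ⟩))).exists
  refine ⟨r, hr.1, hr.2, fun y hy hd => ?_⟩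
  have hr0 : (0:ℝ) < r := hr.1
  have hlt : (⨆ (y : Fin m → ℝ) (_ : y ∈ Set.Icc (0 : Fin m → ℝ) 1) (_ : dist y x ≤ r),
      ENNReal.ofReal (dist (f y) (f x))) < k * ENNReal.ofReal r := by
    rw [hu] at hur
    exact (ENNReal.div_lt_iff (Or.inl (by simp [hr0])) (Or.inl ENNReal.ofReal_ne_top)).1 hur
  have hterm : ENNReal.ofReal (dist (f y) (f x)) ≤
      ⨆ (y : Fin m → ℝ) (_ : y ∈ Set.Icc (0 : Fin m → ℝ) 1) (_ : dist y x ≤ r),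
        ENNReal.ofReal (dist (f y) (f x)) := by
    refine le_iSup_of_le y ?_
    simp [hy, hd]
  have : ENNReal.ofReal (dist (f y) (f x)) ≤ ENNReal.ofReal ((k : ℝ) * r) := by
    refine le_trans (hterm.trans hlt.le) ?_
    rw [ENNReal.ofReal_mul (by positivity)]
    simp
  rwa [ENNReal.ofReal_le_ofReal_iff (by positivity)] at this

lemma exists_cover (m : ℕ) (f : (Fin m → ℝ) → ℝ) (k n : ℕ) :
    ∃ (p : ℕ → Prop) (c : ℕ → (Fin m → ℝ)) (ρ : ℕ → ℝ),
      (∀ i, p i → c i ∈ Set.Icc (0 : Fin m → ℝ) 1 ∧ 0 < ρ i ∧ ρ i ≤ 1 ∧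
        5 * ρ i ≤ 1 / ((n : ℝ) + 1) ∧
        ∀ y ∈ Set.Icc (0 : Fin m → ℝ) 1, dist y (c i) ≤ 5 * ρ i →
          dist (f y) (f (c i)) ≤ k * (5 * ρ i)) ∧
      (Pairwise (Function.onFun Disjoint
        (fun i => if p i then Metric.closedBall (c i) (ρ i) else ∅))) ∧
      goodSet m f k ⊆ ⋃ i, (if p i then Metric.closedBall (c i) (5 * ρ i) else ∅) := by
  have hδ : (0:ℝ) < min 1 (1 / ((n : ℝ) + 1)) := by positivity
  have hrad : ∀ x ∈ goodSet m f k, ∃ r : ℝ, 0 < r ∧ r ≤ min 1 (1 / ((n : ℝ) + 1)) ∧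
      ∀ y ∈ Set.Icc (0 : Fin m → ℝ) 1, dist y x ≤ r → dist (f y) (f x) ≤ k * r :=
    fun x hx => hx.2 _ hδ
  set r1 : (Fin m → ℝ) → ℝ := fun x =>
    if h : x ∈ goodSet m f k then (hrad x h).choose else 0 with hr1
  have hr1pos : ∀ x ∈ goodSet m f k, 0 < r1 x := by
    intro x hx; rw [hr1]; simp only [dif_pos hx]; exact (hrad x hx).choose_spec.1
  have hr1le : ∀ x ∈ goodSet m f k, r1 x ≤ min 1 (1 / ((n : ℝ) + 1)) := by
    intro x hx; rw [hr1]; simp only [dif_pos hx]; exact (hrad x hx).choose_spec.2.1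
  have hr1osc : ∀ x ∈ goodSet m f k, ∀ y ∈ Set.Icc (0 : Fin m → ℝ) 1,
      dist y x ≤ r1 x → dist (f y) (f x) ≤ k * r1 x := by
    intro x hx; rw [hr1]; simp only [dif_pos hx]; exact (hrad x hx).choose_spec.2.2
  obtain ⟨U, hU_sub, hU_disj, hU_cov⟩ :=
    Vitali.exists_disjoint_subfamily_covering_enlargement_closedBall (goodSet m f k)
      (id : (Fin m → ℝ) → (Fin m → ℝ)) (fun x => r1 x / 5) 1
      (fun x hx => by
        have h1 := (le_min_iff.1 (hr1le x hx)).1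
        linarith) 5 (by norm_num)
  have hU_cnt : U.Countable := by
    refine hU_disj.countable_of_nonempty_interior (fun b hb => ?_)
    have hpos : 0 < r1 b / 5 := by
      have := hr1pos b (hU_sub hb); linarith
    exact ⟨b, mem_interior_iff_mem_nhds.2 (closedBall_mem_nhds b hpos)⟩
  haveI : Countable ↥U := hU_cnt.to_subtype
  obtain ⟨enc⟩ : Nonempty (Encodable ↥U) := Encodable.nonempty_encodable.2 inferInstance
  set p : ℕ → Prop := fun i => ∃ b : ↥U, enc.encode b = i with hp
  set c : ℕ → (Fin m → ℝ) := fun i => if h : p i then (h.choose : Fin m → ℝ) else 0 with hc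
  set ρ : ℕ → ℝ := fun i => r1 (c i) / 5 with hρ
  have hcU : ∀ i, p i → c i ∈ U := by
    intro i hi
    rw [hc]; simp only [dif_pos hi]
    exact hi.choose.2
  have hkey : ∀ (b : ↥U), c (enc.encode b) = (b : Fin m → ℝ) := by
    intro b
    have hpb : p (enc.encode b) := ⟨b, rfl⟩
    rw [hc]; simp only [dif_pos hpb]
    have : hpb.choose = b := enc.encode_injective hpb.choose_spec
    rw [this]
  refine ⟨p, c, ρ, ?_, ?_, ?_⟩
  · intro i hi
    have hmem : c i ∈ goodSet m f k := hU_sub (hcU i hi)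
    have h5ρ : 5 * ρ i = r1 (c i) := by rw [hρ]; ring
    have hle := hr1le _ hmem
    refine ⟨hmem.1, ?_, ?_, ?_, ?_⟩
    · have := hr1pos _ hmem; rw [hρ]; linarith
    · rw [hρ]; have := (le_min_iff.1 hle).1; linarith
    · rw [h5ρ]; exact (le_min_iff.1 hle).2
    · rw [h5ρ]; exact hr1osc _ hmem
  · intro i j hij
    simp only [Function.onFun]
    by_cases hi : p i
    · by_cases hj : p j
      · simp only [if_pos hi, if_pos hj]
        have hbi : c i ∈ U := hcU i hi
        have hbj : c j ∈ U := hcU j hj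
        have hne : c i ≠ c j := by
          intro he
          apply hij
          obtain ⟨bi, hbi'⟩ := hi
          obtain ⟨bj, hbj'⟩ := hj
          have h1 : c i = (bi : Fin m → ℝ) := by rw [← hbi']; exact hkey bi
          have h2 : c j = (bj : Fin m → ℝ) := by rw [← hbj']; exact hkey bj
          have : bi = bj := Subtype.ext (by rw [← h1, ← h2, he])
          rw [← hbi', ← hbj', this]
        have := hU_disj hbi hbj hne
        simpa [hρ] using this
      · simp only [if_neg hj]; exact disjoint_empty _
    · simp only [if_neg hi]; exact empty_disjoint _
  · intro x hx
    obtain ⟨b, hbU, hball⟩ := hU_cov x hx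
    have hxball : x ∈ Metric.closedBall b (5 * (r1 b / 5)) := by
      apply hball
      exact Metric.mem_closedBall_self (by have := hr1pos x hx; linarith)
    have hpi : p (enc.encode (⟨b, hbU⟩ : ↥U)) := ⟨⟨b, hbU⟩, rfl⟩
    have hci : c (enc.encode (⟨b, hbU⟩ : ↥U)) = b := hkey ⟨b, hbU⟩
    refine Set.mem_iUnion.2 ⟨enc.encode (⟨b, hbU⟩ : ↥U), ?_⟩
    rw [if_pos hpi, hci]
    have h5 : 5 * ρ (enc.encode (⟨b, hbU⟩ : ↥U)) = 5 * (r1 b / 5) := by simp [hρ, hci]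
    rw [h5]
    exact hxball

lemma ae_finite (m : ℕ) (hm : 1 ≤ m) (f : (Fin m → ℝ) → ℝ) (k : ℕ) :
    ∀ᵐ y ∂(volume : Measure ℝ),
      μH[(m : ℝ) - 1] (goodSet m f k ∩ f ⁻¹' {y}) < ⊤ := by
  choose p c ρ hball hdisj hcov using fun n => exists_cover m f k n
  set S : ℕ → ℕ → Set ℝ := fun n i =>
    if p n i then Icc (f (c n i) - k * (5 * ρ n i)) (f (c n i) + k * (5 * ρ n i)) else ∅
    with hS
  set w : ℕ → ℕ → ℝ≥0∞ := fun n i => ENNReal.ofReal ((10 * ρ n i) ^ (m - 1)) with hw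
  set g : ℕ → ℝ → ℝ≥0∞ := fun n y => ∑' i, (S n i).indicator (fun _ => w n i) y with hg
  have hSmeas : ∀ n i, MeasurableSet (S n i) := by
    intro n i
    by_cases h : p n i
    · simp only [hS, if_pos h]; exact measurableSet_Icc
    · simp only [hS, if_neg h]; exact MeasurableSet.empty
  have hgmeas : ∀ n, Measurable (g n) := by
    intro n
    exact Measurable.ennreal_tsum fun i => (measurable_const).indicator (hSmeas n i)
  set B : ℕ → ℕ → Set (Fin m → ℝ) := fun n i =>
    if p n i then Metric.closedBall (c n i) (ρ n i) else ∅ with hB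
  have hBmeas : ∀ n i, MeasurableSet (B n i) := by
    intro n i
    by_cases h : p n i
    · simp only [hB, if_pos h]; exact measurableSet_closedBall
    · simp only [hB, if_neg h]; exact MeasurableSet.empty
  have hvol : ∀ n i, p n i → volume (B n i) = ENNReal.ofReal ((2 * ρ n i) ^ m) := by
    intro n i h
    simp only [hB, if_pos h]
    rw [Real.volume_pi_closedBall _ (hball n i h).2.1.le]
    simp
  have hterm : ∀ n i, w n i * volume (S n i) ≤
      ENNReal.ofReal ((5:ℝ) ^ m * k) * volume (B n i) := by
    intro n i
    by_cases h : p n i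
    · simp only [hS, hw, if_pos h]
      rw [Real.volume_Icc, hvol n i h]
      have hρpos : 0 < ρ n i := (hball n i h).2.1
      have heq : (f (c n i) + k * (5 * ρ n i)) - (f (c n i) - k * (5 * ρ n i))
          = 10 * k * ρ n i := by ring
      rw [heq, ← ENNReal.ofReal_mul (by positivity), ← ENNReal.ofReal_mul (by positivity)]
      apply ENNReal.ofReal_le_ofReal
      have h1 : m - 1 + 1 = m := by omega
      have key : (10 * ρ n i) ^ (m - 1) * (10 * (k:ℝ) * ρ n i)
          = (5:ℝ) ^ m * k * (2 * ρ n i) ^ m := by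
        calc (10 * ρ n i) ^ (m - 1) * (10 * (k:ℝ) * ρ n i)
            = ((10 * ρ n i) ^ (m - 1) * (10 * ρ n i)) * k := by ring
          _ = (10 * ρ n i) ^ m * k := by rw [← pow_succ, h1]
          _ = ((5:ℝ) * (2 * ρ n i)) ^ m * k := by rw [show (5:ℝ) * (2 * ρ n i) = 10 * ρ n i by ring]
          _ = (5:ℝ) ^ m * (2 * ρ n i) ^ m * k := by rw [mul_pow]
          _ = (5:ℝ) ^ m * k * (2 * ρ n i) ^ m := by ring
      exact key.le
    · simp only [hS, if_neg h]
      simp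
  set M : ℝ≥0∞ := ENNReal.ofReal ((5:ℝ) ^ m * k) * ENNReal.ofReal 3 ^ m with hM
  have hMne : M ≠ ⊤ := by
    rw [hM]
    exact ENNReal.mul_ne_top ENNReal.ofReal_ne_top
      (ENNReal.pow_ne_top ENNReal.ofReal_ne_top)
  have hUnionVol : ∀ n, volume (⋃ i, B n i) ≤ ENNReal.ofReal 3 ^ m := by
    intro n
    have hsub : (⋃ i, B n i) ⊆ Set.Icc (fun _ => (-1:ℝ)) (fun _ => (2:ℝ)) := by
      intro z hz
      obtain ⟨i, hi⟩ := Set.mem_iUnion.1 hz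
      by_cases h : p n i
      · simp only [hB, if_pos h] at hi
        obtain ⟨hc1, hρpos, hρle, -, -⟩ := hball n i h
        have hd : dist z (c n i) ≤ ρ n i := hi
        constructor <;> intro j
        · have h0 : (0:ℝ) ≤ c n i j := hc1.1 j
          have hdj : dist (z j) (c n i j) ≤ ρ n i := (dist_le_pi_dist z (c n i) j).trans hd
          rw [Real.dist_eq] at hdj
          have := (abs_le.1 (hdj.trans hρle)).1
          show (-1:ℝ) ≤ z j
          linarith
        · have h1' : c n i j ≤ 1 := hc1.2 j
          have hdj : dist (z j) (c n i j) ≤ ρ n i := (dist_le_pi_dist z (c n i) j).trans hd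
          rw [Real.dist_eq] at hdj
          have := (abs_le.1 (hdj.trans hρle)).2
          show z j ≤ (2:ℝ)
          linarith
      · simp only [hB, if_neg h] at hi
        exact absurd hi (Set.notMem_empty z)
    calc volume (⋃ i, B n i) ≤ volume (Set.Icc (fun _ => (-1:ℝ)) (fun _ => (2:ℝ))) :=
          measure_mono hsub
      _ = ENNReal.ofReal 3 ^ m := by
          rw [Real.volume_Icc_pi]
          norm_num
  have hint : ∀ n, ∫⁻ y, g n y ≤ M := by
    intro n
    simp only [hg]
    rw [lintegral_tsum (fun i => ((measurable_const).indicator (hSmeas n i)).aemeasurable)]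
    have hterm' : ∀ i, ∫⁻ y, (S n i).indicator (fun _ => w n i) y = w n i * volume (S n i) := by
      intro i
      rw [lintegral_indicator (hSmeas n i), setLIntegral_const]
    calc ∑' i, ∫⁻ y, (S n i).indicator (fun _ => w n i) y
        = ∑' i, w n i * volume (S n i) := tsum_congr hterm'
      _ ≤ ∑' i, ENNReal.ofReal ((5:ℝ) ^ m * k) * volume (B n i) :=
          ENNReal.tsum_le_tsum (fun i => hterm n i)
      _ = ENNReal.ofReal ((5:ℝ) ^ m * k) * ∑' i, volume (B n i) := by
          rw [ENNReal.tsum_mul_left]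
      _ = ENNReal.ofReal ((5:ℝ) ^ m * k) * volume (⋃ i, B n i) := by
          rw [measure_iUnion (hdisj _) (hBmeas _)]
      _ ≤ M := by
          rw [hM]
          exact mul_le_mul_right (hUnionVol n) _
  set G : ℝ → ℝ≥0∞ := fun y => liminf (fun n => g n y) atTop with hG
  have hGmeas : Measurable G := Measurable.liminf hgmeas
  have hGint : ∫⁻ y, G y ≤ M := by
    calc ∫⁻ y, G y ≤ liminf (fun n => ∫⁻ y, g n y) atTop := lintegral_liminf_le hgmeas
      _ ≤ liminf (fun _ : ℕ => M) atTop := liminf_le_liminf (Eventually.of_forall hint)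
      _ = M := liminf_const M
  have hae : ∀ᵐ y ∂(volume : Measure ℝ), G y < ⊤ :=
    ae_lt_top hGmeas (lt_of_le_of_lt hGint hMne.lt_top).ne
  have hpoint : ∀ y : ℝ, μH[(m : ℝ) - 1] (goodSet m f k ∩ f ⁻¹' {y}) ≤ G y := by
    intro y
    rw [Measure.hausdorffMeasure_apply]
    refine iSup₂_le fun ε hε => ?_
    have htend : Tendsto (fun n : ℕ => ENNReal.ofReal (2 / ((n:ℝ) + 1))) atTop (𝓝 0) := by
      have h1 : Tendsto (fun n : ℕ => 2 / ((n:ℝ) + 1)) atTop (𝓝 0) := by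
        have h2 := tendsto_one_div_add_atTop_nhds_zero_nat.const_mul (2:ℝ)
        simpa [div_eq_mul_inv, mul_comm] using h2
      have := ENNReal.tendsto_ofReal h1
      simpa using this
    have hev : ∀ᶠ n : ℕ in atTop, ENNReal.ofReal (2 / ((n:ℝ) + 1)) < ε :=
      htend.eventually_lt_const hε
    simp only [hG]
    rw [Filter.liminf_eq]
    refine le_sSup ?_
    refine hev.mono fun n hn => ?_
    classical
    set t : ℕ → Set (Fin m → ℝ) := fun i =>
      if p n i ∧ y ∈ S n i then Metric.closedBall (c n i) (5 * ρ n i) else ∅ with ht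
    have hcover : goodSet m f k ∩ f ⁻¹' {y} ⊆ ⋃ i, t i := by
      intro x hx
      obtain ⟨i, hi⟩ := Set.mem_iUnion.1 (hcov n hx.1)
      by_cases h : p n i
      · rw [if_pos h] at hi
        have hxA : x ∈ Set.Icc (0 : Fin m → ℝ) 1 := hx.1.1
        have hosc := (hball n i h).2.2.2.2 x hxA hi
        have hfy : f x = y := hx.2
        have habs : |f x - f (c n i)| ≤ k * (5 * ρ n i) := by
          rw [← Real.dist_eq]; exact hosc
        have h1 := abs_sub_le_iff.1 habs
        have hyS : y ∈ S n i := by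
          simp only [hS, if_pos h, Set.mem_Icc]
          rw [← hfy]
          constructor <;> linarith [h1.1, h1.2]
        refine Set.mem_iUnion.2 ⟨i, ?_⟩
        rw [ht]
        simp only [if_pos (And.intro h hyS)]
        exact hi
      · rw [if_neg h] at hi
        exact absurd hi (Set.notMem_empty x)
    have hdiam : ∀ i, EMetric.diam (t i) ≤ ε := by
      intro i
      by_cases h : p n i ∧ y ∈ S n i
      · simp only [ht, if_pos h]
        have h5 := (hball n i h.1).2.2.2.1
        have hd : EMetric.diam (Metric.closedBall (c n i) (5 * ρ n i)) ≤
            ENNReal.ofReal (2 / ((n:ℝ) + 1)) := by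
          refine EMetric.diam_le fun a ha b hb => ?_
          rw [edist_dist]
          apply ENNReal.ofReal_le_ofReal
          have h1 : dist a b ≤ dist a (c n i) + dist (c n i) b := dist_triangle _ _ _
          have h2 : dist a (c n i) ≤ 5 * ρ n i := ha
          have h3 : dist (c n i) b = dist b (c n i) := dist_comm _ _
          have h4 : dist b (c n i) ≤ 5 * ρ n i := hb
          rw [h3] at h1
          have h6 : 2 / ((n:ℝ) + 1) = 2 * (1 / ((n:ℝ) + 1)) := by ring
          linarith
        exact hd.trans hn.le
      · simp only [ht, if_neg h]
        exact (le_of_eq Metric.ediam_empty).trans zero_le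
    have hsum : (∑' i, ⨆ _ : (t i).Nonempty, EMetric.diam (t i) ^ ((m:ℝ) - 1)) ≤ g n y := by
      simp only [hg]
      refine ENNReal.tsum_le_tsum fun i => ?_
      by_cases h : p n i ∧ y ∈ S n i
      · have hρpos : 0 < ρ n i := (hball n i h.1).2.1
        have hti : t i = Metric.closedBall (c n i) (5 * ρ n i) := by
          simp only [ht, if_pos h]
        have htne : (t i).Nonempty := by
          rw [hti]
          exact ⟨c n i, Metric.mem_closedBall_self (by positivity)⟩
        rw [Set.indicator_of_mem h.2, iSup_pos htne]
        have hd : EMetric.diam (t i) ≤ ENNReal.ofReal (10 * ρ n i) := by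
          rw [hti]
          refine EMetric.diam_le fun a ha b hb => ?_
          rw [edist_dist]
          apply ENNReal.ofReal_le_ofReal
          have h1 : dist a b ≤ dist a (c n i) + dist (c n i) b := dist_triangle _ _ _
          have h2 : dist a (c n i) ≤ 5 * ρ n i := ha
          have h3 : dist b (c n i) ≤ 5 * ρ n i := hb
          rw [dist_comm (c n i) b] at h1
          linarith
        have hcast : ((m:ℝ) - 1) = ((m - 1 : ℕ) : ℝ) := by
          rw [Nat.cast_sub hm]; norm_num
        calc EMetric.diam (t i) ^ ((m:ℝ) - 1)
            = EMetric.diam (t i) ^ ((m - 1 : ℕ) : ℝ) := by rw [hcast]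
          _ = EMetric.diam (t i) ^ (m - 1 : ℕ) := ENNReal.rpow_natCast _ _
          _ ≤ ENNReal.ofReal (10 * ρ n i) ^ (m - 1 : ℕ) := pow_le_pow_left' hd _
          _ = ENNReal.ofReal ((10 * ρ n i) ^ (m - 1 : ℕ)) :=
              (ENNReal.ofReal_pow (by positivity) _).symm
          _ = w n i := by simp only [hw]
      · have hte : t i = ∅ := by simp only [ht, if_neg h]
        rw [hte]
        simp [Set.not_nonempty_empty]
    calc (⨅ (t' : ℕ → Set (Fin m → ℝ)) (_ : goodSet m f k ∩ f ⁻¹' {y} ⊆ ⋃ j, t' j)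
          (_ : ∀ j, EMetric.diam (t' j) ≤ ε),
          ∑' j, ⨆ _ : (t' j).Nonempty, EMetric.diam (t' j) ^ ((m:ℝ) - 1))
        ≤ ∑' i, ⨆ _ : (t i).Nonempty, EMetric.diam (t i) ^ ((m:ℝ) - 1) :=
          iInf_le_of_le t (iInf_le_of_le hcover (iInf_le_of_le hdiam le_rfl))
      _ ≤ g n y := hsum
  filter_upwards [hae] with y hy
  exact lt_of_le_of_lt (hpoint y) hy

/-- If `m ≥ 1` and `f : [0,1]^m → ℝ` is continuous with finite lower-scaled
oscillation at every point, then for Lebesgue-a.e. `y ∈ ℝ` the level set `f⁻¹(y)`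
has σ-finite `H^{m-1}` measure. -/
theorem stmt6 (m : ℕ) (hm : 1 ≤ m) (f : (Fin m → ℝ) → ℝ)
    (hf : ContinuousOn f (Set.Icc 0 1))
    (hl : ∀ x ∈ Set.Icc (0 : Fin m → ℝ) 1, lowerScaledOsc (Set.Icc 0 1) f x < ⊤) :
    ∀ᵐ y ∂(volume : Measure ℝ),
      ∃ s : ℕ → Set (Fin m → ℝ),
        (Set.Icc (0 : Fin m → ℝ) 1 ∩ f ⁻¹' {y} ⊆ ⋃ n, s n) ∧
        (∀ n, μH[(m : ℝ) - 1] (s n) < ⊤) := by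
  have key : ∀ᵐ y ∂(volume : Measure ℝ), ∀ k : ℕ,
      μH[(m : ℝ) - 1] (goodSet m f k ∩ f ⁻¹' {y}) < ⊤ :=
    (ae_all_iff).2 fun k => ae_finite m hm f k
  filter_upwards [key] with y hy
  refine ⟨fun k => goodSet m f k ∩ f ⁻¹' {y}, ?_, hy⟩
  rintro x ⟨hx1, hx2⟩
  obtain ⟨k, hk⟩ := exists_goodSet m f x hx1 (hl x hx1)
  exact Set.mem_iUnion.2 ⟨k, ⟨hk, hx2⟩⟩
end
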